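/- Fix α ∈ [0,1] and k ≥ 2, let (T_m)_{m≥1} be Ford's alpha growth process, and fix 𝐬 ∈ 𝕋_[k] with ℙ(T_k = 𝐬) > 0. For r ≥ 0 let (x_1(r),…,x_k(r),(y_B(r))_{B∈𝐬 internal}) denote the edge weights of ρ_k^{•(k+r)}(T_{k+r}). Then, conditionally on T_k = 𝐬, the process (x_1(r)−1,…,x_k(r)−1,(y_B(r))_{B∈𝐬 internal})_{r≥0} is distributed as the generalized Pólya urn (H_B(r))_{B∈𝐬, r≥0} with colors the edges of 𝐬 and initial counts H_B(0) = 0, in which at each step a color B is selected with probability proportional to (1−α) + H_B(r) if B is external and α + H_B(r) if B is internal, and the selected count increases by one. -/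

import Mathlib

open scoped Classical

noncomputable section

/-- The label set `[n] = {1, …, n}`. -/
def lbl (n : ℕ) : Finset ℕ := Finset.Icc 1 n

/-- A rooted binary tree with leaves labeled by the finite set `A ⊆ ℕ`,
encoded as the collection of its edges, where each edge is identified with
the set of leaf labels in the subtree above it. -/
def IsLTree (A : Finset ℕ) (t : Finset (Finset ℕ)) : Prop :=
  (∀ B ∈ t, B ⊆ A ∧ B.Nonempty) ∧
  (∀ j ∈ A, ({j} : Finset ℕ) ∈ t) ∧
  (∀ B₁ ∈ t, ∀ B₂ ∈ t, B₁ ∩ B₂ = ∅ ∨ B₁ ⊆ B₂ ∨ B₂ ⊆ B₁) ∧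
  (∀ B ∈ t, B ≠ A → ∃! B', B' ∈ t ∧ B ∩ B' = ∅ ∧ B ∪ B' ∈ t)

/-- The space `𝕋_A` of rooted binary trees with leaves labeled by `A`. -/
def LTree (A : Finset ℕ) : Type := {t : Finset (Finset ℕ) // IsLTree A t}

noncomputable instance fintypeLTree (A : Finset ℕ) : Fintype (LTree A) := by
  have hfin : {t : Finset (Finset ℕ) | IsLTree A t}.Finite := by
    apply Set.Finite.subset (A.powerset.powerset).finite_toSet
    intro t ht
    have h : IsLTree A t := ht
    simp only [Finset.mem_coe, Finset.mem_powerset]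
    intro B hB
    exact Finset.mem_powerset.mpr (h.1 B hB).1
  exact hfin.fintype

/-- Insertion of a new leaf labeled `j` on the edge `S` of the tree `s`. -/
def insertLeaf (s : Finset (Finset ℕ)) (S : Finset ℕ) (j : ℕ) : Finset (Finset ℕ) :=
  (s.filter fun B => B ∩ S = ∅) ∪ (s.filter fun B => B ⊆ S) ∪
    ((s.filter fun B => S ⊆ B).image fun B => B ∪ {j}) ∪ {({j} : Finset ℕ)}

/-- Ford growth weight of an edge: `α` for internal edges, `1 - α` for external edges. -/
def fordWeight (α : ℝ) (B : Finset ℕ) : ℝ := if 2 ≤ B.card then α else 1 - α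

/-- Modified Ford growth weight: the external edge `{1}` gets weight `α` instead of `1 - α`. -/
def fordWeightT (α : ℝ) (B : Finset ℕ) : ℝ :=
  if 2 ≤ B.card ∨ B = ({1} : Finset ℕ) then α else 1 - α

/-- One step of Ford's alpha growth: probability that a tree with `m` leaves `s`
grows into `t` by insertion of the new leaf `m+1` at an edge chosen with probability
proportional to `1-α` (external) or `α` (internal). -/
def growStepF (α : ℝ) (m : ℕ) (s t : Finset (Finset ℕ)) : ℝ :=
  ∑ S ∈ s, if t = insertLeaf s S (m + 1) then
    fordWeight α S / (∑ S' ∈ s, fordWeight α S') else 0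

/-- One step of the modified Ford alpha growth (edge `{1}` has weight `α`). -/
def growStepFT (α : ℝ) (m : ℕ) (s t : Finset (Finset ℕ)) : ℝ :=
  ∑ S ∈ s, if t = insertLeaf s S (m + 1) then
    fordWeightT α S / (∑ S' ∈ s, fordWeightT α S') else 0

/-- `qF α m` is the law `q_{m,α}` of the `m`-th tree of Ford's alpha growth process. -/
def qF (α : ℝ) : (m : ℕ) → LTree (lbl m) → ℝ
  | 0, _ => 1
  | 1, _ => 1
  | 2, _ => 1
  | (m + 3), t => ∑ s : LTree (lbl (m + 2)), qF α (m + 2) s * growStepF α (m + 2) s.1 t.1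

/-- `qFT α m` is the law `q̃_{m,α}` of the `m`-th tree of the modified Ford alpha
growth process in which the external edge `{1}` is chosen with probability
proportional to `α` rather than `1-α`. -/
def qFT (α : ℝ) : (m : ℕ) → LTree (lbl m) → ℝ
  | 0, _ => 1
  | 1, _ => 1
  | 2, _ => 1
  | (m + 3), t => ∑ s : LTree (lbl (m + 2)), qFT α (m + 2) s * growStepFT α (m + 2) s.1 t.1

/-- Mass of `q_{m,α}` at an arbitrary edge collection (zero on non-trees). -/
def qMass (α : ℝ) (m : ℕ) (u : Finset (Finset ℕ)) : ℝ :=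
  if h : IsLTree (lbl m) u then qF α m ⟨u, h⟩ else 0

/-- Mass of `q̃_{m,α}` at an arbitrary edge collection (zero on non-trees). -/
def qMassT (α : ℝ) (m : ℕ) (u : Finset (Finset ℕ)) : ℝ :=
  if h : IsLTree (lbl m) u then qFT α m ⟨u, h⟩ else 0

/-- Mass of the uniform distribution on `𝕋_{[n]}`. -/
def unifMass (n : ℕ) : ℝ := 1 / (Fintype.card (LTree (lbl n)) : ℝ)

/-- Uniform mass at an arbitrary edge collection (zero on non-trees). -/
def unifTreeMass (c : ℕ) (u : Finset (Finset ℕ)) : ℝ :=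
  if IsLTree (lbl c) u then unifMass c else 0

/-- Smallest label in a finite label set (`0` if empty). -/
def minLbl (B : Finset ℕ) : ℕ := if h : B.Nonempty then B.min' h else 0

/-- The sibling edge of `B` in the tree `t`. -/
def sibling (t : Finset (Finset ℕ)) (B : Finset ℕ) : Finset ℕ :=
  if h : ∃ B', B' ∈ t ∧ B ∩ B' = ∅ ∧ B ∪ B' ∈ t then h.choose else ∅

/-- The parent edge of `B` in the tree `t`. -/
def parentEdge (t : Finset (Finset ℕ)) (B : Finset ℕ) : Finset ℕ := B ∪ sibling t B

/-- `ĩ = max {i, a, b}` where `a`, `b` are the smallest leaf labels in the first two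
subtrees on the ancestral path from leaf `i` to the root of `t ∈ 𝕋_A`
(`b = 0` if the path has only one subtree). -/
def tildeOf (A : Finset ℕ) (t : Finset (Finset ℕ)) (i : ℕ) : ℕ :=
  max i (max (minLbl (sibling t {i}))
    (if parentEdge t {i} = A then 0 else minLbl (sibling t (parentEdge t {i}))))

/-- Swap the leaf labels `i` and `j` in the tree `t`. -/
def swapTree (t : Finset (Finset ℕ)) (i j : ℕ) : Finset (Finset ℕ) :=
  t.image (Finset.image fun x => Equiv.swap i j x)

/-- Delete the leaf labeled `j` from the tree `t` (contracting its parent branch point). -/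
def delLeaf (t : Finset (Finset ℕ)) (j : ℕ) : Finset (Finset ℕ) :=
  (t.image fun B => B.erase j).erase ∅

/-- Down-move of the uniform chain starting from `t ∈ 𝕋_A` with selected leaf `i`:
swap labels `i` and `ĩ = max{i,a,b}` and delete the leaf now labeled `ĩ`. -/
def downUnif (A : Finset ℕ) (t : Finset (Finset ℕ)) (i : ℕ) : Finset (Finset ℕ) :=
  delLeaf (swapTree t i (tildeOf A t i)) (tildeOf A t i)

/-- Relabel all labels `> j` down by one. -/
def relabelGt (j : ℕ) (t : Finset (Finset ℕ)) : Finset (Finset ℕ) :=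
  t.image (Finset.image fun x => if j < x then x - 1 else x)

/-- Down-move of the alpha chain: after removing the leaf labeled `ĩ`, relabel the
leaves `ĩ+1, …, n` by `ĩ, …, n-1`. -/
def downAlpha (A : Finset ℕ) (t : Finset (Finset ℕ)) (i : ℕ) : Finset (Finset ℕ) :=
  relabelGt (tildeOf A t i) (downUnif A t i)

/-- Transition matrix of the uniform chain on `𝕋_{[n]}` (Definition 1.1):
uniform leaf selection, label-swapped deletion, uniform edge re-insertion of `ĩ`. -/
def PUnif (n : ℕ) (t t' : LTree (lbl n)) : ℝ :=
  (1 / (n : ℝ)) * ∑ i ∈ lbl n,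
    (1 / ((downUnif (lbl n) t.1 i).card : ℝ)) *
      ∑ S ∈ downUnif (lbl n) t.1 i,
        (if t'.1 = insertLeaf (downUnif (lbl n) t.1 i) S (tildeOf (lbl n) t.1 i) then 1 else 0)

/-- Transition matrix of the alpha chain on `𝕋_{[n]}` (Definition 2.4):
uniform leaf selection, label-swapped deletion with relabeling, and insertion of a new
leaf labeled `n` according to the alpha growth rule. -/
def PAlpha (α : ℝ) (n : ℕ) (t t' : LTree (lbl n)) : ℝ :=
  (1 / (n : ℝ)) * ∑ i ∈ lbl n, growStepF α (n - 1) (downAlpha (lbl n) t.1 i) t'.1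

/-- `t ∩ A`: the subtree of `t` spanned by the labels in `A`, reduced. -/
def restrictT (t : Finset (Finset ℕ)) (A : Finset ℕ) : Finset (Finset ℕ) :=
  (t.image fun B => B ∩ A).erase ∅

/-- The most recent ancestor edge of leaf `j` in `t` (including `{j}` itself)
that intersects the label set `A`. -/
def ancEdgeA (t : Finset (Finset ℕ)) (A : Finset ℕ) (j : ℕ) : Finset ℕ :=
  if h : (t.filter fun C => j ∈ C ∧ (C ∩ A).Nonempty).Nonempty then
    (t.filter fun C => j ∈ C ∧ (C ∩ A).Nonempty).inf' h id
  else ∅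

/-- The projection `π` sending a leaf `j` of `t` to an edge of `t ∩ A`. -/
def piProjA (t : Finset (Finset ℕ)) (A : Finset ℕ) (j : ℕ) : Finset ℕ := ancEdgeA t A j ∩ A

/-- Decorated trees: a tree shape together with a mass assignment on edges
(extended by zero off the shape). -/
abbrev DecoT : Type := Finset (Finset ℕ) × (Finset ℕ → ℕ)

/-- The decorated tree `ρ_A^{•(n)}(t)`: the reduced subtree `t ∩ A` with each edge
carrying the number of leaves of `t` projecting to it. -/
def rhoDecoA (n : ℕ) (A : Finset ℕ) (t : Finset (Finset ℕ)) : DecoT :=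
  (restrictT t A, fun B => ((lbl n).filter fun j => piProjA t A j = B).card)

/-- The decorated `k`-tree `ρ_k^{•(n)}(t)`. -/
def rhoDeco (n k : ℕ) (t : Finset (Finset ℕ)) : DecoT := rhoDecoA n (lbl k) t

/-- Collapsed trees: a tree shape together with a label-set assignment on edges. -/
abbrev StarT : Type := Finset (Finset ℕ) × (Finset ℕ → Finset ℕ)

/-- The collapsed `n`-tree with `k` leaves `ρ_k^{⋆(n)}(t)`. -/
def rhoStar (n k : ℕ) (t : Finset (Finset ℕ)) : StarT :=
  (restrictT t (lbl k), fun B => (lbl n).filter fun j => piProjA t (lbl k) j = B)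

/-- Replace each label set of a collapsed tree by its cardinality. -/
def starToDeco (ts : StarT) : DecoT := (ts.1, fun B => (ts.2 B).card)

/-- Membership in `𝕋_{[k]}^{•(n)}`: decorated `k`-trees with total mass `n`,
external masses at least 1, and mass vanishing off the shape. -/
def IsDeco (k n : ℕ) (d : DecoT) : Prop :=
  IsLTree (lbl k) d.1 ∧ (∀ B, B ∉ d.1 → d.2 B = 0) ∧ (∑ B ∈ d.1, d.2 B) = n ∧
    ∀ j ∈ lbl k, 1 ≤ d.2 {j}

/-- Edge mass of `ρ_k^{•(n)}(t)`. -/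
def massOf (n k : ℕ) (t : Finset (Finset ℕ)) (B : Finset ℕ) : ℕ := (rhoDeco n k t).2 B

/-- The urn counts of the decorated `k`-tree of `t`:
`x_i - 1` on external edges and `y_B` on internal edges. -/
def urnOf (n k : ℕ) (t : Finset (Finset ℕ)) : Finset ℕ → ℕ :=
  fun B => if B.card ≤ 1 then massOf n k t B - 1 else massOf n k t B

/-- Rising factorial `a^{(j)} = a (a+1) ⋯ (a+j-1)`. -/
def risingFac (a : ℝ) : ℕ → ℝ
  | 0 => 1
  | (j + 1) => risingFac a j * (a + j)

/-- Dirichlet-multinomial distribution `DM^β₃(m)` on triples summing to `m`, with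
parameters `(1-β, 1-β, β)`. -/
def dm3 (β : ℝ) (m j1 j2 j3 : ℕ) : ℝ :=
  if j1 + j2 + j3 = m then
    ((m.factorial : ℝ) / ((j1.factorial : ℝ) * (j2.factorial : ℝ) * (j3.factorial : ℝ))) *
      (risingFac (1 - β) j1 * risingFac (1 - β) j2 * risingFac β j3) / risingFac (2 - β) m
  else 0

/-- The decrement matrix `δ_α(N : m)` of the `(α,α)` regenerative composition. -/
def deltaAlpha (α : ℝ) (N m : ℕ) : ℝ :=
  α * (N.choose m : ℝ) * Real.Gamma ((m : ℝ) - α) * Real.Gamma ((N : ℝ) - (m : ℝ) + α) /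
    (Real.Gamma (1 - α) * Real.Gamma ((N : ℝ) + α))

/-- `δ(N : m) = δ_{1/2}(N : m)` in its binomial-coefficient form. -/
def deltaHalf (N m : ℕ) : ℝ :=
  (1 / (2 * (m : ℝ) - 1)) * (((2 * m).choose m : ℝ) *
    (((2 * N - 2 * m).choose (N - m)) : ℝ) / (((2 * N).choose N) : ℝ))

/-- Increase the mass of edge `C` by one. -/
def bumpD (d : DecoT) (C : Finset ℕ) : DecoT :=
  (d.1, fun B => if B = C then d.2 B + 1 else d.2 B)

/-- Decrease the mass of edge `C` by one. -/
def dropD (d : DecoT) (C : Finset ℕ) : DecoT :=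
  (d.1, fun B => if B = C then d.2 B - 1 else d.2 B)

/-- Up-move on decorated trees of total mass `m`: choose an edge with probability
`(x_j - α)/(m - α)` (external) or `(y_B + α)/(m - α)` (internal) and increase its
mass by one. -/
def upProb (α : ℝ) (m : ℕ) (d d' : DecoT) : ℝ :=
  ∑ C ∈ d.1,
    ((if 2 ≤ C.card then (d.2 C : ℝ) + α else (d.2 C : ℝ) - α) / ((m : ℝ) - α)) *
      (if d' = bumpD d C then 1 else 0)

/-- Case (B) mass reshuffle: set the mass of external edge `B` to `m` and reduce the
mass of its parent by `m`. -/
def caseBD (d : DecoT) (B : Finset ℕ) (m : ℕ) : DecoT :=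
  (d.1, fun C => if C = B then m else if C = parentEdge d.1 B then d.2 C - m else d.2 C)

/-- Restrict a mass function to a shape (zero off the shape). -/
def restrictF (s : Finset (Finset ℕ)) (f : Finset ℕ → ℕ) : Finset ℕ → ℕ :=
  fun B => if B ∈ s then f B else 0

/-- Insert leaf `j` on the external edge `{c}` of the decorated tree `(s, f)`, splitting
the mass of `{c}` as `x_c := j1+1`, `x_j := j2+1`, `y_{{c,j}} := j3`. -/
def insDecoExt (s : Finset (Finset ℕ)) (f : Finset ℕ → ℕ) (c j j1 j2 j3 : ℕ) : DecoT :=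
  (insertLeaf s {c} j,
    restrictF (insertLeaf s {c} j) fun B =>
      if B = ({c} : Finset ℕ) then j1 + 1 else if B = ({j} : Finset ℕ) then j2 + 1
      else if B = ({c, j} : Finset ℕ) then j3
      else if j ∈ B then f (B.erase j) else f B)

/-- Insert leaf `j` on the internal edge `C` of the decorated tree `(s, f)`, splitting
the mass of `C` as `y_{C∪{j}} := j1`, `y_C := j2`, `x_j := j3+1`. -/
def insDecoInt (s : Finset (Finset ℕ)) (f : Finset ℕ → ℕ) (C : Finset ℕ)
    (j j1 j2 j3 : ℕ) : DecoT :=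
  (insertLeaf s C j,
    restrictF (insertLeaf s C j) fun B =>
      if B = C ∪ {j} then j1 else if B = C then j2 else if B = ({j} : Finset ℕ) then j3 + 1
      else if j ∈ B then f (B.erase j) else f B)

/-- Inserting the label `j` into a decorated tree (Definition 4.2), with edge-selection
normalizer `M`: an external edge `{i}` is selected with probability `(x_i - 1)/M` and
its mass split via `DM^α₃(x_i - 2)`; an internal edge `B` is selected with probability
`y_B/M` and its mass split via `DM^{1-α}₃(y_B - 1)`. -/
def insProb (α : ℝ) (M : ℕ) (j : ℕ) (d d' : DecoT) : ℝ :=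
  ∑ C ∈ d.1,
    if 2 ≤ C.card then
      ((d.2 C : ℝ) / (M : ℝ)) *
        ∑ a ∈ Finset.range (d.2 C), ∑ b ∈ Finset.range (d.2 C),
          dm3 (1 - α) (d.2 C - 1) a b (d.2 C - 1 - a - b) *
            (if d' = insDecoInt d.1 d.2 C j a b (d.2 C - 1 - a - b) then 1 else 0)
    else
      (((d.2 C : ℝ) - 1) / (M : ℝ)) *
        ∑ a ∈ Finset.range (d.2 C), ∑ b ∈ Finset.range (d.2 C),
          dm3 α (d.2 C - 2) a b (d.2 C - 2 - a - b) *
            (if d' = insDecoExt d.1 d.2 (minLbl C) j a b (d.2 C - 2 - a - b) then 1 else 0)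

/-- Steps (iii)-(v) of resampling the label `i` (Definition 4.4) into a decorated tree of
total mass `n-1` (`n` being the total mass before the drop): choose an edge with
probability `(x_j - 1/2)/(n - 3/2)` (external) or `(y_B + 1/2)/(n - 3/2)` (internal) and
insert leaf `i` there, splitting the increased mass via `DM^{1/2}₃`. -/
def resampProb (n : ℕ) (i : ℕ) (d d' : DecoT) : ℝ :=
  ∑ C ∈ d.1,
    if 2 ≤ C.card then
      (((d.2 C : ℝ) + 1 / 2) / ((n : ℝ) - 3 / 2)) *
        ∑ a ∈ Finset.range (d.2 C + 1), ∑ b ∈ Finset.range (d.2 C + 1),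
          dm3 (1 / 2) (d.2 C) a b (d.2 C - a - b) *
            (if d' = insDecoInt d.1 d.2 C i a b (d.2 C - a - b) then 1 else 0)
    else
      (((d.2 C : ℝ) - 1 / 2) / ((n : ℝ) - 3 / 2)) *
        ∑ a ∈ Finset.range (d.2 C), ∑ b ∈ Finset.range (d.2 C),
          dm3 (1 / 2) (d.2 C - 1) a b (d.2 C - 1 - a - b) *
            (if d' = insDecoExt d.1 d.2 (minLbl C) i a b (d.2 C - 1 - a - b) then 1 else 0)

/-- Swap labels `i` and `j` in a decorated tree. -/
def swapD (d : DecoT) (i j : ℕ) : DecoT :=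
  (d.1.image (Finset.image fun x => Equiv.swap i j x),
    fun C => d.2 (C.image fun x => Equiv.swap i j x))

/-- Case (C) of the uniform decorated chain: swap `i = min B` with `ĩ`, delete leaf `ĩ`
(with its mass 1 and parent mass 0) and resample `ĩ`. -/
def caseCUnif (n k : ℕ) (d : DecoT) (B : Finset ℕ) (d' : DecoT) : ℝ :=
  resampProb n (tildeOf (lbl k) d.1 (minLbl B))
    (delLeaf (swapD d (minLbl B) (tildeOf (lbl k) d.1 (minLbl B))).1
        (tildeOf (lbl k) d.1 (minLbl B)),
      restrictF (delLeaf (swapD d (minLbl B) (tildeOf (lbl k) d.1 (minLbl B))).1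
          (tildeOf (lbl k) d.1 (minLbl B)))
        fun C => (swapD d (minLbl B) (tildeOf (lbl k) d.1 (minLbl B))).2 C +
          (swapD d (minLbl B) (tildeOf (lbl k) d.1 (minLbl B))).2
            (C ∪ {tildeOf (lbl k) d.1 (minLbl B)}))
    d'

/-- Transition matrix of the uniform decorated chain on `𝕋_{[k]}^{•(n)}`
(Definition 4.6). -/
def RUnif (n k : ℕ) (d d' : DecoT) : ℝ :=
  ∑ B ∈ d.1,
    ((d.2 B : ℝ) / (n : ℝ)) *
      (if 2 ≤ B.card ∨ 2 ≤ d.2 B then upProb (1 / 2) (n - 1) (dropD d B) d'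
       else if 0 < d.2 (parentEdge d.1 B) then
         ∑ m ∈ Finset.Icc 1 (d.2 (parentEdge d.1 B)),
           deltaHalf (d.2 (parentEdge d.1 B)) m * upProb (1 / 2) (n - 1) (caseBD d B m) d'
       else caseCUnif n k d B d')

/-- Insertion of label `j` followed by an up-move (used in case (C) of the alpha
decorated chain). -/
def insThenUp (α : ℝ) (n k j : ℕ) (d : DecoT) (d' : DecoT) : ℝ :=
  ∑ C ∈ d.1,
    if 2 ≤ C.card then
      ((d.2 C : ℝ) / ((n : ℝ) - (k : ℝ))) *
        ∑ a ∈ Finset.range (d.2 C), ∑ b ∈ Finset.range (d.2 C),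
          dm3 (1 - α) (d.2 C - 1) a b (d.2 C - 1 - a - b) *
            upProb α (n - 1) (insDecoInt d.1 d.2 C j a b (d.2 C - 1 - a - b)) d'
    else
      (((d.2 C : ℝ) - 1) / ((n : ℝ) - (k : ℝ))) *
        ∑ a ∈ Finset.range (d.2 C), ∑ b ∈ Finset.range (d.2 C),
          dm3 α (d.2 C - 2) a b (d.2 C - 2 - a - b) *
            upProb α (n - 1) (insDecoExt d.1 d.2 (minLbl C) j a b (d.2 C - 2 - a - b)) d'

/-- Dropping the label `it` from a decorated tree (Definition 4.1): delete leaf `it`,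
discard its mass and its parent's mass, and relabel the labels `> it` down by one. -/
def dropLabelD (d : DecoT) (it : ℕ) : DecoT :=
  ((delLeaf d.1 it).image (Finset.image fun x => if it < x then x - 1 else x),
    restrictF ((delLeaf d.1 it).image (Finset.image fun x => if it < x then x - 1 else x))
      fun C =>
        restrictF (delLeaf d.1 it) (fun C' => d.2 C' + d.2 (C' ∪ {it}))
          (C.image fun x => if it ≤ x then x + 1 else x))

/-- Case (C) of the alpha decorated chain: swap, drop the label `ĩ` (with relabeling),
insert the label `k` and perform an up-move. -/
def caseCAlpha (α : ℝ) (n k : ℕ) (d : DecoT) (B : Finset ℕ) (d' : DecoT) : ℝ :=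
  insThenUp α n k k
    (dropLabelD (swapD d (minLbl B) (tildeOf (lbl k) d.1 (minLbl B)))
      (tildeOf (lbl k) d.1 (minLbl B))) d'

/-- Transition matrix of the alpha decorated chain on `𝕋_{[k]}^{•(n)}`
(Definition 4.7). -/
def RAlpha (α : ℝ) (n k : ℕ) (d d' : DecoT) : ℝ :=
  ∑ B ∈ d.1,
    ((d.2 B : ℝ) / (n : ℝ)) *
      (if 2 ≤ B.card ∨ 2 ≤ d.2 B then upProb α (n - 1) (dropD d B) d'
       else if 0 < d.2 (parentEdge d.1 B) then
         ∑ m ∈ Finset.Icc 1 (d.2 (parentEdge d.1 B)),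
           deltaAlpha α (d.2 (parentEdge d.1 B)) m * upProb α (n - 1) (caseBD d B m) d'
       else caseCAlpha α n k d B d')

/-- The sub-probability transition matrix of the alpha decorated chain restricted to
moves that do not use case (C). -/
def RAlphaNoC (α : ℝ) (n k : ℕ) (d d' : DecoT) : ℝ :=
  ∑ B ∈ d.1,
    ((d.2 B : ℝ) / (n : ℝ)) *
      (if 2 ≤ B.card ∨ 2 ≤ d.2 B then upProb α (n - 1) (dropD d B) d'
       else if 0 < d.2 (parentEdge d.1 B) then
         ∑ m ∈ Finset.Icc 1 (d.2 (parentEdge d.1 B)),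
           deltaAlpha α (d.2 (parentEdge d.1 B)) m * upProb α (n - 1) (caseBD d B m) d'
       else 0)

/-- Probability that the next transition of the alpha decorated chain uses case (C)
and drops the label `it`. -/
def probDropC (n k : ℕ) (d : DecoT) (it : ℕ) : ℝ :=
  ∑ B ∈ d.1,
    if ¬(2 ≤ B.card ∨ 2 ≤ d.2 B) ∧ d.2 (parentEdge d.1 B) = 0 ∧
        tildeOf (lbl k) d.1 (minLbl B) = it then (d.2 B : ℝ) / (n : ℝ)
    else 0

/-- Rank (1-based) of `a` within the finite label set `A`. -/
def rankIn (A : Finset ℕ) (a : ℕ) : ℕ := (A.filter fun x => x ≤ a).card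

/-- Relabel the labels appearing in `u` by their ranks within `A`. -/
def relabelRank (A : Finset ℕ) (u : Finset (Finset ℕ)) : Finset (Finset ℕ) :=
  u.image (Finset.image (rankIn A))

/-- The label set `π^{-1}(B)` of leaves of `t` projecting to the edge `B` of `t ∩ [k]`. -/
def preimLbl (n k : ℕ) (t : Finset (Finset ℕ)) (B : Finset ℕ) : Finset ℕ :=
  (lbl n).filter fun j => piProjA t (lbl k) j = B

/-- The lowest edge of `t` mapping onto the edge `B` of `t ∩ [k]`. -/
def bottomEdge (k : ℕ) (t : Finset (Finset ℕ)) (B : Finset ℕ) : Finset ℕ :=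
  if h : (t.filter fun C => C ∩ lbl k = B).Nonempty then
    (t.filter fun C => C ∩ lbl k = B).inf' h id
  else ∅

/-- The internal structure `int(V_B)` of `ρ_k^{•(n)}(t)` supported on the edge `B` of
`t ∩ [k]`: the subtree of `t` collapsing to `B`, with the vertex corresponding to `B`
turned into a leaf labeled `1` if `B` is internal, all leaves relabeled by ranks. -/
def intStruct (n k : ℕ) (t : Finset (Finset ℕ)) (B : Finset ℕ) : Finset (Finset ℕ) :=
  if 2 ≤ B.card then
    relabelRank (insert 0 (preimLbl n k t B))
      ((t.image fun C =>
        (C ∩ preimLbl n k t B) ∪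
          (if (C ∩ bottomEdge k t B).Nonempty then ({0} : Finset ℕ) else ∅)).erase ∅)
  else
    relabelRank (preimLbl n k t B) ((t.image fun C => C ∩ preimLbl n k t B).erase ∅)

/-- The kernel `Λ(𝐭⋆, ·) = q_{n,1/2}( · ∣ ρ_k^{⋆(n)} = 𝐭⋆)`. -/
def LamStar (n k : ℕ) (ts : StarT) (t : LTree (lbl n)) : ℝ :=
  (unifMass n * (if rhoStar n k t.1 = ts then 1 else 0)) /
    (∑ t' : LTree (lbl n), unifMass n * (if rhoStar n k t'.1 = ts then 1 else 0))

/-- The induced transition matrix `K = Λ P ρ_k^{⋆(n)}` on collapsed trees. -/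
def KColl (n k : ℕ) (ts ts' : StarT) : ℝ :=
  ∑ t : LTree (lbl n), LamStar n k ts t *
    (∑ t'' : LTree (lbl n), PUnif n t t'' * (if rhoStar n k t''.1 = ts' then 1 else 0))

/-- The set `𝕋_{[k]}^{⋆(n)}` of collapsed `n`-trees with `k` leaves. -/
def allStar (n k : ℕ) : Finset StarT :=
  (Finset.univ : Finset (LTree (lbl n))).image fun t => rhoStar n k t.1

/-- The set `𝕋_{[k]}^{•(n)}` of decorated `k`-trees arising from `n`-trees. -/
def allDeco (n k : ℕ) : Finset DecoT :=
  (Finset.univ : Finset (LTree (lbl n))).image fun t => rhoDeco n k t.1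

/-- The kernel `Λ^{(α)}(𝐭•, ·) = q_{n,α}( · ∣ ρ_k^{•(n)} = 𝐭•)`. -/
def LamDeco (α : ℝ) (n k : ℕ) (d : DecoT) (t : LTree (lbl n)) : ℝ :=
  (qF α n t * (if rhoDeco n k t.1 = d then 1 else 0)) /
    (∑ t' : LTree (lbl n), qF α n t' * (if rhoDeco n k t'.1 = d then 1 else 0))

/-- Update rule of the generalized Pólya urn. -/
def bumpF (c : Finset ℕ → ℕ) (B : Finset ℕ) : Finset ℕ → ℕ :=
  fun C => if C = B then c C + 1 else c C

/-- One step of the generalized Pólya urn with colors the edges of `s`, in which color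
`B` is selected with probability proportional to `(1-α) + c B` (external) or
`α + c B` (internal). -/
def urnStep (α : ℝ) (s : Finset (Finset ℕ)) (c c' : Finset ℕ → ℕ) : ℝ :=
  ∑ B ∈ s, ((fordWeight α B + (c B : ℝ)) / (∑ B' ∈ s, (fordWeight α B' + (c B' : ℝ)))) *
    (if c' = bumpF c B then 1 else 0)

end

section Aux

lemma mem_lbl {n a : ℕ} : a ∈ lbl n ↔ 1 ≤ a ∧ a ≤ n := Finset.mem_Icc

lemma edge_subset {A : Finset ℕ} {t : Finset (Finset ℕ)} (ht : IsLTree A t)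
    {B : Finset ℕ} (hB : B ∈ t) : B ⊆ A := (ht.1 B hB).1

lemma edge_nonempty {A : Finset ℕ} {t : Finset (Finset ℕ)} (ht : IsLTree A t)
    {B : Finset ℕ} (hB : B ∈ t) : B.Nonempty := (ht.1 B hB).2

lemma not_mem_edge {m : ℕ} {t : Finset (Finset ℕ)} (ht : IsLTree (lbl m) t)
    {B : Finset ℕ} (hB : B ∈ t) : (m + 1) ∉ B := by
  intro h
  have := mem_lbl.mp (edge_subset ht hB h)
  omega

lemma root_mem {m : ℕ} (hm : 1 ≤ m) {t : Finset (Finset ℕ)} (ht : IsLTree (lbl m) t) :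
    lbl m ∈ t := by
  have hne : t.Nonempty := ⟨{1}, ht.2.1 1 (mem_lbl.mpr ⟨le_refl 1, hm⟩)⟩
  obtain ⟨C, hC, hmax⟩ := Finset.exists_max_image t (fun B => B.card) hne
  by_cases hCA : C = lbl m
  · rwa [← hCA]
  · obtain ⟨C', ⟨hC't, hdisj, hun⟩, -⟩ := ht.2.2.2 C hC hCA
    have h1 : Disjoint C C' := Finset.disjoint_iff_inter_eq_empty.mpr hdisj
    have h2 : (C ∪ C').card = C.card + C'.card := Finset.card_union_of_disjoint h1
    have h3 : 0 < C'.card := Finset.card_pos.mpr (edge_nonempty ht hC't)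
    have := hmax (C ∪ C') hun
    omega

lemma mem_insertLeaf {t : Finset (Finset ℕ)} {S j : ℕ → ℕ} : True := trivial

lemma mem_insertLeaf' {t : Finset (Finset ℕ)} {S C' : Finset ℕ} {j : ℕ} :
    C' ∈ insertLeaf t S j ↔
      (C' ∈ t ∧ (C' ∩ S = ∅ ∨ C' ⊆ S)) ∨ (∃ C ∈ t, S ⊆ C ∧ C' = C ∪ {j}) ∨ C' = {j} := by
  simp only [insertLeaf, Finset.mem_union, Finset.mem_filter, Finset.mem_image,
    Finset.mem_singleton]
  constructor
  · rintro (((⟨h1, h2⟩ | ⟨h1, h2⟩) | ⟨C, hC, rfl⟩) | h)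
    · exact Or.inl ⟨h1, Or.inl h2⟩
    · exact Or.inl ⟨h1, Or.inr h2⟩
    · exact Or.inr (Or.inl ⟨C, hC.1, hC.2, rfl⟩)
    · exact Or.inr (Or.inr h)
  · rintro (⟨h1, h2 | h2⟩ | ⟨C, hC, hS, rfl⟩ | h)
    · exact Or.inl (Or.inl (Or.inl ⟨h1, h2⟩))
    · exact Or.inl (Or.inl (Or.inr ⟨h1, h2⟩))
    · exact Or.inl (Or.inr ⟨C, ⟨hC, hS⟩, rfl⟩)
    · exact Or.inr h

end Aux
section Aux2

variable {m : ℕ} {t : Finset (Finset ℕ)} {S₀ : Finset ℕ}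

lemma lbl_succ (m : ℕ) : lbl (m + 1) = insert (m + 1) (lbl m) := by
  ext x; simp [lbl, Finset.mem_Icc]; omega

lemma lbl_mono {m : ℕ} : lbl m ⊆ lbl (m + 1) := by
  intro x hx; rw [lbl_succ]; exact Finset.mem_insert_of_mem hx

lemma eq_of_P_of_subset (hne : S₀.Nonempty) {C : Finset ℕ}
    (hP : C ∩ S₀ = ∅ ∨ C ⊆ S₀) (hsub : S₀ ⊆ C) : C = S₀ := by
  rcases hP with h | h
  · exfalso
    obtain ⟨x, hx⟩ := hne
    have : x ∈ C ∩ S₀ := Finset.mem_inter.mpr ⟨hsub hx, hx⟩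
    rw [h] at this; exact absurd this (Finset.notMem_empty x)
  · exact subset_antisymm h hsub

lemma union_singleton_inj {C D : Finset ℕ} {j : ℕ} (hC : j ∉ C) (hD : j ∉ D)
    (h : C ∪ {j} = D ∪ {j}) : C = D := by
  have := congrArg (fun s => Finset.erase s j) h
  simpa [Finset.erase_union_distrib, Finset.erase_eq_of_notMem hC,
    Finset.erase_eq_of_notMem hD] using this

lemma mem_t'_cases (ht : IsLTree (lbl m) t) {C' : Finset ℕ}
    (h : C' ∈ insertLeaf t S₀ (m + 1)) (hj : (m + 1) ∉ C') :
    C' ∈ t ∧ (C' ∩ S₀ = ∅ ∨ C' ⊆ S₀) := by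
  rcases mem_insertLeaf'.mp h with h1 | ⟨C, hC, hS, rfl⟩ | rfl
  · exact h1
  · exact absurd (Finset.mem_union_right C (Finset.mem_singleton_self _)) hj
  · exact absurd (Finset.mem_singleton_self _) hj

lemma mem_t'_group3 (ht : IsLTree (lbl m) t) {C' : Finset ℕ}
    (h : C' ∈ insertLeaf t S₀ (m + 1)) (hj : (m + 1) ∈ C') (hne : C' ≠ {m + 1}) :
    ∃ C ∈ t, S₀ ⊆ C ∧ C' = C ∪ {m + 1} := by
  rcases mem_insertLeaf'.mp h with ⟨h1, _⟩ | h2 | rfl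
  · exact absurd hj (not_mem_edge ht h1)
  · exact h2
  · exact absurd rfl hne

lemma sib_of (ht : IsLTree (lbl m) t) {B : Finset ℕ} (hB : B ∈ t) (hBA : B ≠ lbl m) :
    ∃ B₂, (B₂ ∈ t ∧ B ∩ B₂ = ∅ ∧ B ∪ B₂ ∈ t) ∧
      ∀ B'', B'' ∈ t → B ∩ B'' = ∅ → B ∪ B'' ∈ t → B'' = B₂ := by
  obtain ⟨B₂, h1, h2⟩ := ht.2.2.2 B hB hBA
  exact ⟨B₂, h1, fun B'' a b c => h2 B'' ⟨a, b, c⟩⟩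

lemma isLTree_insertLeaf (hm : 1 ≤ m) (ht : IsLTree (lbl m) t) (hS₀ : S₀ ∈ t) :
    IsLTree (lbl (m + 1)) (insertLeaf t S₀ (m + 1)) := by
  have hS₀ne : S₀.Nonempty := edge_nonempty ht hS₀
  have hjnot : ∀ {C : Finset ℕ}, C ∈ t → (m + 1) ∉ C := fun hC => not_mem_edge ht hC
  have hjlbl : (m + 1) ∈ lbl (m + 1) := mem_lbl.mpr ⟨by omega, le_refl _⟩
  -- membership shortcut
  have memt : ∀ {C : Finset ℕ}, C ∈ t → (C ∩ S₀ = ∅ ∨ C ⊆ S₀) → C ∈ insertLeaf t S₀ (m + 1) :=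
    fun hC hP => mem_insertLeaf'.mpr (Or.inl ⟨hC, hP⟩)
  have memg3 : ∀ {C : Finset ℕ}, C ∈ t → S₀ ⊆ C → C ∪ {m + 1} ∈ insertLeaf t S₀ (m + 1) :=
    fun hC hS => mem_insertLeaf'.mpr (Or.inr (Or.inl ⟨_, hC, hS, rfl⟩))
  have memj : ({m + 1} : Finset ℕ) ∈ insertLeaf t S₀ (m + 1) :=
    mem_insertLeaf'.mpr (Or.inr (Or.inr rfl))
  -- not strict superset of S₀ in t-part
  have noPssub : ∀ {C : Finset ℕ}, (C ∩ S₀ = ∅ ∨ C ⊆ S₀) → S₀ ⊆ C → C = S₀ :=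
    fun hP hs => eq_of_P_of_subset hS₀ne hP hs
  refine ⟨?_, ?_, ?_, ?_⟩
  · -- (i)
    intro B' hB'
    rcases mem_insertLeaf'.mp hB' with ⟨h1, _⟩ | ⟨C, hC, _, rfl⟩ | rfl
    · exact ⟨(edge_subset ht h1).trans lbl_mono, edge_nonempty ht h1⟩
    · refine ⟨Finset.union_subset ((edge_subset ht hC).trans lbl_mono) ?_, ?_⟩
      · exact Finset.singleton_subset_iff.mpr hjlbl
      · exact ⟨m + 1, Finset.mem_union_right _ (Finset.mem_singleton_self _)⟩
    · exact ⟨Finset.singleton_subset_iff.mpr hjlbl, Finset.singleton_nonempty _⟩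
  · -- (ii)
    intro i hi
    by_cases hij : i = m + 1
    · subst hij; exact memj
    · have him : i ∈ lbl m := by
        rw [lbl_succ] at hi; rcases Finset.mem_insert.mp hi with h | h
        · exact absurd h hij
        · exact h
      have hit : ({i} : Finset ℕ) ∈ t := ht.2.1 i him
      refine memt hit ?_
      rcases ht.2.2.1 _ hit _ hS₀ with h | h | h
      · exact Or.inl h
      · exact Or.inr h
      · rcases Finset.subset_singleton_iff.mp h with h' | h'
        · exact absurd h' (Finset.nonempty_iff_ne_empty.mp hS₀ne)
        · exact Or.inr (h' ▸ Finset.Subset.refl _)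
  · -- (iii) laminarity
    intro B₁ h1 B₂ h2
    -- symmetric reduction helper
    have symm : ∀ {X Y : Finset ℕ}, (X ∩ Y = ∅ ∨ X ⊆ Y ∨ Y ⊆ X) →
        (Y ∩ X = ∅ ∨ Y ⊆ X ∨ X ⊆ Y) := by
      rintro X Y (h | h | h)
      · exact Or.inl (by rwa [Finset.inter_comm])
      · exact Or.inr (Or.inr h)
      · exact Or.inr (Or.inl h)
    have core : ∀ {X : Finset ℕ}, X ∈ t → (X ∩ S₀ = ∅ ∨ X ⊆ S₀) → ∀ {C : Finset ℕ}, C ∈ t →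
        S₀ ⊆ C → X ∩ (C ∪ {m + 1}) = ∅ ∨ X ⊆ C ∪ {m + 1} ∨ C ∪ {m + 1} ⊆ X := by
      intro X hX hPX C hC hSC
      rcases ht.2.2.1 _ hX _ hC with h | h | h
      · refine Or.inl ?_
        rw [Finset.inter_union_distrib_left, h,
          Finset.inter_singleton_of_notMem (hjnot hX), Finset.union_empty]
      · exact Or.inr (Or.inl (h.trans Finset.subset_union_left))
      · -- C ⊆ X, so S₀ ⊆ X, so X = S₀, so C = S₀ = X
        have hXS : X = S₀ := noPssub hPX (hSC.trans h)
        have hCS : C = S₀ := subset_antisymm (hXS ▸ h) hSC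
        exact Or.inr (Or.inl (by rw [hXS, ← hCS]; exact Finset.subset_union_left))
    rcases mem_insertLeaf'.mp h1 with ⟨h1t, h1P⟩ | ⟨C₁, hC₁, hS₁, rfl⟩ | rfl <;>
      rcases mem_insertLeaf'.mp h2 with ⟨h2t, h2P⟩ | ⟨C₂, hC₂, hS₂, rfl⟩ | rfl
    · exact ht.2.2.1 _ h1t _ h2t
    · exact core h1t h1P hC₂ hS₂
    · exact Or.inl (Finset.inter_singleton_of_notMem (hjnot h1t))
    · exact symm (core h2t h2P hC₁ hS₁)
    · rcases ht.2.2.1 _ hC₁ _ hC₂ with h | h | h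
      · exfalso
        obtain ⟨x, hx⟩ := hS₀ne
        have : x ∈ C₁ ∩ C₂ := Finset.mem_inter.mpr ⟨hS₁ hx, hS₂ hx⟩
        rw [h] at this; exact absurd this (Finset.notMem_empty x)
      · exact Or.inr (Or.inl (Finset.union_subset_union_left h))
      · exact Or.inr (Or.inr (Finset.union_subset_union_left h))
    · exact Or.inr (Or.inr (Finset.subset_union_right))
    · exact Or.inl (by rw [Finset.inter_comm]; exact Finset.inter_singleton_of_notMem (hjnot h2t))
    · exact Or.inr (Or.inl (Finset.subset_union_right))
    · exact Or.inr (Or.inl (Finset.Subset.refl _))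
  · -- (iv) sibling existence and uniqueness
    intro B' hB' hBA
    have hA' : lbl (m + 1) = lbl m ∪ {m + 1} := by
      rw [lbl_succ]; ext x; simp [Finset.mem_insert, Finset.mem_union, or_comm]
    have tpart_eq_S₀ : ∀ {U : Finset ℕ}, U ∈ insertLeaf t S₀ (m + 1) → (m + 1) ∉ U →
        S₀ ⊆ U → U = S₀ := fun hU hjU hsub => noPssub (mem_t'_cases ht hU hjU).2 hsub
    rcases mem_insertLeaf'.mp hB' with ⟨hBt, hBP⟩ | ⟨C, hC, hSC, rfl⟩ | rfl
    · -- B' ∈ t-part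
      by_cases hBS : B' = S₀
      · -- CASE A : sibling is {m+1}
        subst hBS
        refine ⟨{m + 1}, ⟨memj, Finset.inter_singleton_of_notMem (hjnot hS₀),
          memg3 hS₀ (Finset.Subset.refl _)⟩, ?_⟩
        rintro B'' ⟨hm'', hd, hu⟩
        by_cases hj'' : (m + 1) ∈ B''
        · by_cases hBj : B'' = {m + 1}
          · exact hBj
          · exfalso
            obtain ⟨C, hCt, hSC, rfl⟩ := mem_t'_group3 ht hm'' hj'' hBj
            obtain ⟨x, hx⟩ := hS₀ne
            have : x ∈ B' ∩ (C ∪ {m + 1}) :=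
              Finset.mem_inter.mpr ⟨hx, Finset.mem_union_left _ (hSC hx)⟩
            rw [hd] at this; exact absurd this (Finset.notMem_empty x)
        · exfalso
          obtain ⟨hB''t, -⟩ := mem_t'_cases ht hm'' hj''
          have hjun : (m + 1) ∉ B' ∪ B'' := by
            intro h; rcases Finset.mem_union.mp h with h | h
            exacts [hjnot hS₀ h, hj'' h]
          have hUS : B' ∪ B'' = B' := tpart_eq_S₀ hu hjun Finset.subset_union_left
          obtain ⟨x, hx⟩ := edge_nonempty ht hB''t
          have hx' : x ∈ B' := by
            have h2 := Finset.mem_union_right B' hx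
            rwa [hUS] at h2
          have : x ∈ B' ∩ B'' := Finset.mem_inter.mpr ⟨hx', hx⟩
          rw [hd] at this; exact absurd this (Finset.notMem_empty x)
      · -- CASE B : B' ∈ t-part, B' ≠ S₀
        have hnsub : ¬ S₀ ⊆ B' := fun h => hBS (noPssub hBP h)
        have hBne : B'.Nonempty := edge_nonempty ht hBt
        have hBAm : B' ≠ lbl m := by
          rintro rfl; exact hnsub (edge_subset ht hS₀)
        obtain ⟨B₂, ⟨hB₂t, hd₂, hu₂⟩, huq₂⟩ := sib_of ht hBt hBAm
        -- helper: if B' ∪ {m+1} ∈ t' then S₀ ⊆ B'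
        have jcase : B' ∪ {m + 1} ∈ insertLeaf t S₀ (m + 1) → S₀ ⊆ B' := by
          intro hu
          have hne : B' ∪ {m + 1} ≠ {m + 1} := by
            intro h
            obtain ⟨x, hx⟩ := hBne
            have : x ∈ ({m + 1} : Finset ℕ) := h ▸ Finset.mem_union_left _ hx
            exact hjnot hBt ((Finset.mem_singleton.mp this) ▸ hx)
          obtain ⟨E, hEt, hSE, he⟩ := mem_t'_group3 ht hu
            (Finset.mem_union_right _ (Finset.mem_singleton_self _)) hne
          have : B' = E := union_singleton_inj (hjnot hBt) (hjnot hEt) he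
          exact this ▸ hSE
        -- helper: group-3 sibling candidates force C = B₂
        have g3case : ∀ {C : Finset ℕ}, C ∈ t → S₀ ⊆ C → B' ∩ (C ∪ {m + 1}) = ∅ →
            B' ∪ (C ∪ {m + 1}) ∈ insertLeaf t S₀ (m + 1) → C = B₂ := by
          intro C hCt hSC hd hu
          have hd' : B' ∩ C = ∅ := by
            refine Finset.eq_empty_of_forall_notMem fun x hx => ?_
            have : x ∈ B' ∩ (C ∪ {m + 1}) := by
              rcases Finset.mem_inter.mp hx with ⟨h1, h2⟩
              exact Finset.mem_inter.mpr ⟨h1, Finset.mem_union_left _ h2⟩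
            rw [hd] at this; exact absurd this (Finset.notMem_empty x)
          rw [← Finset.union_assoc] at hu
          have hjBC : (m + 1) ∉ B' ∪ C := by
            intro h; rcases Finset.mem_union.mp h with h | h
            exacts [hjnot hBt h, hjnot hCt h]
          have hne : (B' ∪ C) ∪ {m + 1} ≠ {m + 1} := by
            intro h
            obtain ⟨x, hx⟩ := hBne
            have : x ∈ ({m + 1} : Finset ℕ) :=
              h ▸ Finset.mem_union_left _ (Finset.mem_union_left _ hx)
            exact hjnot hBt ((Finset.mem_singleton.mp this) ▸ hx)
          obtain ⟨E, hEt, hSE, he⟩ := mem_t'_group3 ht hu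
            (Finset.mem_union_right _ (Finset.mem_singleton_self _)) hne
          have hBCE : B' ∪ C = E := union_singleton_inj hjBC (hjnot hEt) he
          exact huq₂ C hCt hd' (hBCE ▸ hEt)
        by_cases hSB₂ : S₀ ⊆ B₂
        · -- sibling is B₂ ∪ {m+1}
          refine ⟨B₂ ∪ {m + 1}, ⟨memg3 hB₂t hSB₂, ?_, ?_⟩, ?_⟩
          · rw [Finset.inter_union_distrib_left, hd₂,
              Finset.inter_singleton_of_notMem (hjnot hBt), Finset.union_empty]
          · rw [← Finset.union_assoc]
            exact memg3 hu₂ (hSB₂.trans Finset.subset_union_right)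
          · rintro B'' ⟨hm'', hd, hu⟩
            by_cases hj'' : (m + 1) ∈ B''
            · by_cases hBj : B'' = {m + 1}
              · exfalso; subst hBj; exact hnsub (jcase hu)
              · obtain ⟨C, hCt, hSC, rfl⟩ := mem_t'_group3 ht hm'' hj'' hBj
                rw [g3case hCt hSC hd hu]
            · exfalso
              obtain ⟨hB''t, hB''P⟩ := mem_t'_cases ht hm'' hj''
              have hjun : (m + 1) ∉ B' ∪ B'' := by
                intro h; rcases Finset.mem_union.mp h with h | h
                exacts [hjnot hBt h, hj'' h]
              obtain ⟨hUt, hUP⟩ := mem_t'_cases ht hu hjun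
              have hB₂'' : B'' = B₂ := huq₂ B'' hB''t hd hUt
              have hB''S : B'' = S₀ := noPssub hB''P (hB₂'' ▸ hSB₂)
              have hUS : B' ∪ B'' = S₀ :=
                noPssub hUP (hB''S ▸ Finset.subset_union_right)
              obtain ⟨x, hx⟩ := hBne
              have hxS : x ∈ B'' := by
                rw [hB''S, ← hUS]; exact Finset.mem_union_left _ hx
              have : x ∈ B' ∩ B'' := Finset.mem_inter.mpr ⟨hx, hxS⟩
              rw [hd] at this; exact absurd this (Finset.notMem_empty x)
        · -- sibling is B₂ itself
          have hPB₂ : B₂ ∩ S₀ = ∅ ∨ B₂ ⊆ S₀ := by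
            rcases ht.2.2.1 _ hB₂t _ hS₀ with h | h | h
            exacts [Or.inl h, Or.inr h, absurd h hSB₂]
          have hPD : (B' ∪ B₂) ∩ S₀ = ∅ ∨ B' ∪ B₂ ⊆ S₀ := by
            rcases ht.2.2.1 _ hu₂ _ hS₀ with h | h | h
            · exact Or.inl h
            · exact Or.inr h
            · -- S₀ ⊆ B' ∪ B₂ : case analysis
              rcases hBP with h1 | h1 <;> rcases hPB₂ with h2 | h2
              · exfalso
                obtain ⟨x, hx⟩ := hS₀ne
                rcases Finset.mem_union.mp (h hx) with hx' | hx'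
                · have : x ∈ B' ∩ S₀ := Finset.mem_inter.mpr ⟨hx', hx⟩
                  rw [h1] at this; exact absurd this (Finset.notMem_empty x)
                · have : x ∈ B₂ ∩ S₀ := Finset.mem_inter.mpr ⟨hx', hx⟩
                  rw [h2] at this; exact absurd this (Finset.notMem_empty x)
              · exfalso
                refine hSB₂ fun x hx => ?_
                rcases Finset.mem_union.mp (h hx) with hx' | hx'
                · exfalso
                  have : x ∈ B' ∩ S₀ := Finset.mem_inter.mpr ⟨hx', hx⟩
                  rw [h1] at this; exact absurd this (Finset.notMem_empty x)
                · exact hx'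
              · exfalso
                refine hnsub fun x hx => ?_
                rcases Finset.mem_union.mp (h hx) with hx' | hx'
                · exact hx'
                · exfalso
                  have : x ∈ B₂ ∩ S₀ := Finset.mem_inter.mpr ⟨hx', hx⟩
                  rw [h2] at this; exact absurd this (Finset.notMem_empty x)
              · exact Or.inr (Finset.union_subset h1 h2)
          refine ⟨B₂, ⟨memt hB₂t hPB₂, hd₂, memt hu₂ hPD⟩, ?_⟩
          rintro B'' ⟨hm'', hd, hu⟩
          by_cases hj'' : (m + 1) ∈ B''
          · exfalso
            by_cases hBj : B'' = {m + 1}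
            · subst hBj; exact hnsub (jcase hu)
            · obtain ⟨C, hCt, hSC, rfl⟩ := mem_t'_group3 ht hm'' hj'' hBj
              exact hSB₂ ((g3case hCt hSC hd hu) ▸ hSC)
          · obtain ⟨hB''t, -⟩ := mem_t'_cases ht hm'' hj''
            have hjun : (m + 1) ∉ B' ∪ B'' := by
              intro h; rcases Finset.mem_union.mp h with h | h
              exacts [hjnot hBt h, hj'' h]
            obtain ⟨hUt, -⟩ := mem_t'_cases ht hu hjun
            exact huq₂ B'' hB''t hd hUt
    · -- CASE C : B' = C ∪ {m+1}
      have hCA : C ≠ lbl m := by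
        rintro rfl; exact hBA (by rw [hA'])
      obtain ⟨C₂, ⟨hC₂t, hdC, huC⟩, huqC⟩ := sib_of ht hC hCA
      have hC₂S : C₂ ∩ S₀ = ∅ := by
        refine Finset.eq_empty_of_forall_notMem fun x hx => ?_
        rcases Finset.mem_inter.mp hx with ⟨h1, h2⟩
        have : x ∈ C ∩ C₂ := Finset.mem_inter.mpr ⟨hSC h2, h1⟩
        rw [hdC] at this; exact absurd this (Finset.notMem_empty x)
      refine ⟨C₂, ⟨memt hC₂t (Or.inl hC₂S), ?_, ?_⟩, ?_⟩
      · refine Finset.eq_empty_of_forall_notMem fun x hx => ?_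
        rcases Finset.mem_inter.mp hx with ⟨h1, h2⟩
        rcases Finset.mem_union.mp h1 with h1 | h1
        · have : x ∈ C ∩ C₂ := Finset.mem_inter.mpr ⟨h1, h2⟩
          rw [hdC] at this; exact absurd this (Finset.notMem_empty x)
        · exact hjnot hC₂t ((Finset.mem_singleton.mp h1) ▸ h2)
      · rw [Finset.union_right_comm]
        exact memg3 huC (hSC.trans Finset.subset_union_left)
      · rintro B'' ⟨hm'', hd, hu⟩
        have hj'' : (m + 1) ∉ B'' := by
          intro h
          have : (m + 1) ∈ (C ∪ {m + 1}) ∩ B'' := Finset.mem_inter.mpr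
            ⟨Finset.mem_union_right _ (Finset.mem_singleton_self _), h⟩
          rw [hd] at this; exact absurd this (Finset.notMem_empty _)
        obtain ⟨hB''t, -⟩ := mem_t'_cases ht hm'' hj''
        have hd' : C ∩ B'' = ∅ := by
          refine Finset.eq_empty_of_forall_notMem fun x hx => ?_
          rcases Finset.mem_inter.mp hx with ⟨h1, h2⟩
          have : x ∈ (C ∪ {m + 1}) ∩ B'' :=
            Finset.mem_inter.mpr ⟨Finset.mem_union_left _ h1, h2⟩
          rw [hd] at this; exact absurd this (Finset.notMem_empty x)
        rw [Finset.union_right_comm] at hu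
        have hjCB : (m + 1) ∉ C ∪ B'' := by
          intro h; rcases Finset.mem_union.mp h with h | h
          exacts [hjnot hC h, hj'' h]
        have hne : (C ∪ B'') ∪ {m + 1} ≠ {m + 1} := by
          intro h
          obtain ⟨x, hx⟩ := edge_nonempty ht hC
          have : x ∈ ({m + 1} : Finset ℕ) :=
            h ▸ Finset.mem_union_left _ (Finset.mem_union_left _ hx)
          exact hjnot hC ((Finset.mem_singleton.mp this) ▸ hx)
        obtain ⟨E, hEt, hSE, he⟩ := mem_t'_group3 ht hu
          (Finset.mem_union_right _ (Finset.mem_singleton_self _)) hne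
        have hCBE : C ∪ B'' = E := union_singleton_inj hjCB (hjnot hEt) he
        exact huqC B'' hB''t hd' (hCBE ▸ hEt)
    · -- CASE D : B' = {m+1}
      refine ⟨S₀, ⟨memt hS₀ (Or.inr (Finset.Subset.refl _)),
        Finset.singleton_inter_of_notMem (hjnot hS₀), ?_⟩, ?_⟩
      · rw [Finset.union_comm]; exact memg3 hS₀ (Finset.Subset.refl _)
      · rintro B'' ⟨hm'', hd, hu⟩
        have hj'' : (m + 1) ∉ B'' := by
          intro h
          have : (m + 1) ∈ ({m + 1} : Finset ℕ) ∩ B'' :=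
            Finset.mem_inter.mpr ⟨Finset.mem_singleton_self _, h⟩
          rw [hd] at this; exact absurd this (Finset.notMem_empty _)
        obtain ⟨hB''t, hB''P⟩ := mem_t'_cases ht hm'' hj''
        rw [Finset.union_comm] at hu
        have hne : B'' ∪ {m + 1} ≠ {m + 1} := by
          intro h
          obtain ⟨x, hx⟩ := edge_nonempty ht hB''t
          have : x ∈ ({m + 1} : Finset ℕ) := h ▸ Finset.mem_union_left _ hx
          exact hj'' ((Finset.mem_singleton.mp this) ▸ hx)
        obtain ⟨E, hEt, hSE, he⟩ := mem_t'_group3 ht hu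
          (Finset.mem_union_right _ (Finset.mem_singleton_self _)) hne
        have : B'' = E := union_singleton_inj hj'' (hjnot hEt) he
        exact noPssub hB''P (this ▸ hSE)

end Aux2
section Aux3

/-- Projection of an edge `S` of `t` to the subtree spanned by `lbl k`. -/
noncomputable def gEdge (k : ℕ) (t : Finset (Finset ℕ)) (S : Finset ℕ) : Finset ℕ :=
  (if h : (t.filter fun C => S ⊆ C ∧ (C ∩ lbl k).Nonempty).Nonempty then
    (t.filter fun C => S ⊆ C ∧ (C ∩ lbl k).Nonempty).inf' h id else ∅) ∩ lbl k

lemma mem_inf' {F : Finset (Finset ℕ)} (h : F.Nonempty) {x : ℕ} :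
    x ∈ F.inf' h id ↔ ∀ C ∈ F, x ∈ C := by
  constructor
  · intro hx C hC
    exact Finset.inf'_le id hC hx
  · intro hx
    have : ({x} : Finset ℕ) ≤ F.inf' h id :=
      Finset.le_inf' h id fun C hC => Finset.singleton_subset_iff.mpr (hx C hC)
    exact Finset.singleton_subset_iff.mp this

lemma mem_gEdge {k : ℕ} {t : Finset (Finset ℕ)} {S : Finset ℕ}
    (h : (t.filter fun C => S ⊆ C ∧ (C ∩ lbl k).Nonempty).Nonempty) {x : ℕ} :
    x ∈ gEdge k t S ↔ x ∈ lbl k ∧ ∀ C ∈ t, S ⊆ C → (C ∩ lbl k).Nonempty → x ∈ C := by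
  rw [gEdge, dif_pos h, Finset.mem_inter, mem_inf']
  simp only [Finset.mem_filter, and_imp]
  constructor
  · exact fun ⟨h1, h2⟩ => ⟨h2, fun C hC hS hk => h1 C hC hS hk⟩
  · exact fun ⟨h1, h2⟩ => ⟨fun C hC hS hk => h2 C hC hS hk, h1⟩

lemma piProjA_eq_gEdge {k : ℕ} {t : Finset (Finset ℕ)} {j : ℕ} :
    piProjA t (lbl k) j = gEdge k t {j} := by
  simp only [piProjA, ancEdgeA, gEdge, Finset.singleton_subset_iff]

lemma gfam_nonempty {m k : ℕ} {t : Finset (Finset ℕ)} (ht : IsLTree (lbl m) t)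
    (hk : 1 ≤ k) (hkm : k ≤ m) {S : Finset ℕ} (hS : S ∈ t) :
    (t.filter fun C => S ⊆ C ∧ (C ∩ lbl k).Nonempty).Nonempty := by
  refine ⟨lbl m, Finset.mem_filter.mpr ⟨root_mem (hk.trans hkm) ht, edge_subset ht hS,
    ⟨1, Finset.mem_inter.mpr ⟨mem_lbl.mpr ⟨le_refl 1, hk.trans hkm⟩,
      mem_lbl.mpr ⟨le_refl 1, hk⟩⟩⟩⟩⟩

lemma gEdge_self {k : ℕ} {u : Finset (Finset ℕ)} (hu : IsLTree (lbl k) u)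
    {S : Finset ℕ} (hS : S ∈ u) : gEdge k u S = S := by
  have hSne : S.Nonempty := edge_nonempty hu hS
  have hfam : (u.filter fun C => S ⊆ C ∧ (C ∩ lbl k).Nonempty).Nonempty := by
    refine ⟨S, Finset.mem_filter.mpr ⟨hS, Finset.Subset.refl _, ?_⟩⟩
    rwa [Finset.inter_eq_left.mpr (edge_subset hu hS)]
  ext x
  rw [mem_gEdge hfam]
  constructor
  · rintro ⟨h1, h2⟩
    exact h2 S hS (Finset.Subset.refl _)
      (by rwa [Finset.inter_eq_left.mpr (edge_subset hu hS)])
  · intro hx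
    exact ⟨edge_subset hu hS hx, fun C hC hS' _ => hS' hx⟩

/-- Core transfer lemma for `gEdge` under insertion of leaf `m+1` at edge `S₀`. -/
lemma gEdge_core {m k : ℕ} {t : Finset (Finset ℕ)} {S₀ : Finset ℕ}
    (hm : 1 ≤ m) (hk : 1 ≤ k) (hkm : k ≤ m)
    (ht : IsLTree (lbl m) t) (hS₀ : S₀ ∈ t) {S' o : Finset ℕ} (ho : o ∈ t)
    (hA : ∀ C ∈ t, o ⊆ C → S' ⊆ C ∪ {m + 1})
    (hA' : (m + 1) ∈ S' → S₀ ⊆ o)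
    (hB : (m + 1) ∉ S' → o ⊆ S') (hBp : o ⊆ S' ∪ S₀) :
    gEdge k (insertLeaf t S₀ (m + 1)) S' = gEdge k t o := by
  have hroot : lbl m ∈ t := root_mem (hk.trans hkm) ht
  have hfam : (t.filter fun C => o ⊆ C ∧ (C ∩ lbl k).Nonempty).Nonempty :=
    gfam_nonempty ht hk hkm ho
  have hone : (1 : ℕ) ∈ lbl m ∩ lbl k :=
    Finset.mem_inter.mpr ⟨mem_lbl.mpr ⟨le_refl 1, hk.trans hkm⟩, mem_lbl.mpr ⟨le_refl 1, hk⟩⟩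
  have hrootk : ((lbl m : Finset ℕ) ∩ lbl k).Nonempty := ⟨1, hone⟩
  have hfam' : ((insertLeaf t S₀ (m + 1)).filter
      fun C => S' ⊆ C ∧ (C ∩ lbl k).Nonempty).Nonempty := by
    refine ⟨lbl m ∪ {m + 1}, Finset.mem_filter.mpr
      ⟨mem_insertLeaf'.mpr (Or.inr (Or.inl ⟨lbl m, hroot, edge_subset ht hS₀, rfl⟩)),
        hA (lbl m) hroot (edge_subset ht ho), ?_⟩⟩
    exact ⟨1, Finset.mem_inter.mpr ⟨Finset.mem_union_left _ (Finset.mem_inter.mp hone).1,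
      (Finset.mem_inter.mp hone).2⟩⟩
  ext x
  rw [mem_gEdge hfam, mem_gEdge hfam']
  constructor
  · rintro ⟨hxk, hall⟩
    refine ⟨hxk, fun C hC hoC hCk => ?_⟩
    have hxj : x ≠ m + 1 := by
      have := (mem_lbl.mp hxk).2; omega
    rcases ht.2.2.1 _ hC _ hS₀ with hcs | hcs | hcs
    · -- C disjoint from S₀ or C ⊆ S₀ : C itself is in t'
      have hC' : C ∈ insertLeaf t S₀ (m + 1) := mem_insertLeaf'.mpr (Or.inl ⟨hC, Or.inl hcs⟩)
      have hS'C : S' ⊆ C := by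
        intro y hy
        have hy' := hA C hC hoC hy
        rcases Finset.mem_union.mp hy' with h | h
        · exact h
        · exfalso
          have : S₀ ⊆ o := hA' ((Finset.mem_singleton.mp h) ▸ hy)
          obtain ⟨z, hz⟩ := edge_nonempty ht hS₀
          have : z ∈ C ∩ S₀ := Finset.mem_inter.mpr ⟨hoC (this hz), hz⟩
          rw [hcs] at this; exact absurd this (Finset.notMem_empty z)
      exact hall C hC' hS'C hCk
    · -- C ⊆ S₀
      have hC' : C ∈ insertLeaf t S₀ (m + 1) := mem_insertLeaf'.mpr (Or.inl ⟨hC, Or.inr hcs⟩)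
      by_cases hS'C : S' ⊆ C
      · exact hall C hC' hS'C hCk
      · -- must use C ∪ {m+1}: then S₀ ⊆ C so C = S₀
        have hsc : S₀ ⊆ C := by
          by_contra hns
          refine hS'C fun y hy => ?_
          have hy' := hA C hC hoC hy
          rcases Finset.mem_union.mp hy' with h | h
          · exact h
          · exact absurd (((hA' ((Finset.mem_singleton.mp h) ▸ hy))).trans hoC) hns
        have hCu : C ∪ {m + 1} ∈ insertLeaf t S₀ (m + 1) :=
          mem_insertLeaf'.mpr (Or.inr (Or.inl ⟨C, hC, hsc, rfl⟩))
        have hCk' : ((C ∪ {m + 1}) ∩ lbl k).Nonempty := by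
          obtain ⟨z, hz⟩ := hCk
          exact ⟨z, Finset.mem_inter.mpr ⟨Finset.mem_union_left _ (Finset.mem_inter.mp hz).1,
            (Finset.mem_inter.mp hz).2⟩⟩
        have := hall (C ∪ {m + 1}) hCu (hA C hC hoC) hCk'
        rcases Finset.mem_union.mp this with h | h
        · exact h
        · exact absurd (Finset.mem_singleton.mp h) hxj
    · -- S₀ ⊆ C : use C ∪ {m+1}
      have hC' : C ∪ {m + 1} ∈ insertLeaf t S₀ (m + 1) :=
        mem_insertLeaf'.mpr (Or.inr (Or.inl ⟨C, hC, hcs, rfl⟩))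
      have hCk' : ((C ∪ {m + 1}) ∩ lbl k).Nonempty := by
        obtain ⟨z, hz⟩ := hCk
        exact ⟨z, Finset.mem_inter.mpr ⟨Finset.mem_union_left _ (Finset.mem_inter.mp hz).1,
          (Finset.mem_inter.mp hz).2⟩⟩
      have := hall (C ∪ {m + 1}) hC' (hA C hC hoC) hCk'
      rcases Finset.mem_union.mp this with h | h
      · exact h
      · exact absurd (Finset.mem_singleton.mp h) hxj
  · rintro ⟨hxk, hall⟩
    refine ⟨hxk, fun C' hC' hS'C hC'k => ?_⟩
    rcases mem_insertLeaf'.mp hC' with ⟨hCt, hCP⟩ | ⟨C, hC, hSC, rfl⟩ | rfl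
    · -- C' ∈ t : need o ⊆ C'
      have hoC : o ⊆ C' := by
        by_cases hj : (m + 1) ∈ S'
        · exact absurd (hS'C hj) (not_mem_edge ht hCt)
        · exact (hB hj).trans hS'C
      exact hall C' hCt hoC hC'k
    · have hoC : o ⊆ C := by
        intro y hy
        have hym : y ∈ lbl m := edge_subset ht ho hy
        have hyj : y ≠ m + 1 := by have := (mem_lbl.mp hym).2; omega
        rcases Finset.mem_union.mp (hBp hy) with h | h
        · rcases Finset.mem_union.mp (hS'C h) with h' | h'
          · exact h'
          · exact absurd (Finset.mem_singleton.mp h') hyj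
        · exact hSC h
      have := hall C hC hoC (by
        obtain ⟨z, hz⟩ := hC'k
        rcases Finset.mem_inter.mp hz with ⟨h1, h2⟩
        rcases Finset.mem_union.mp h1 with h1 | h1
        · exact ⟨z, Finset.mem_inter.mpr ⟨h1, h2⟩⟩
        · exfalso
          have := (mem_lbl.mp h2).2
          have := Finset.mem_singleton.mp h1
          omega)
      exact Finset.mem_union_left _ this
    · exfalso
      obtain ⟨z, hz⟩ := hC'k
      rcases Finset.mem_inter.mp hz with ⟨h1, h2⟩
      have := (mem_lbl.mp h2).2
      have := Finset.mem_singleton.mp h1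
      omega

end Aux3
section Aux4

variable {m k : ℕ} {t : Finset (Finset ℕ)} {S₀ : Finset ℕ}

lemma gEdge_ins_tpart (hm : 1 ≤ m) (hk : 1 ≤ k) (hkm : k ≤ m)
    (ht : IsLTree (lbl m) t) (hS₀ : S₀ ∈ t) {C : Finset ℕ} (hC : C ∈ t) :
    gEdge k (insertLeaf t S₀ (m + 1)) C = gEdge k t C := by
  refine gEdge_core hm hk hkm ht hS₀ hC ?_ ?_ ?_ ?_
  · exact fun D _ hCD => hCD.trans Finset.subset_union_left
  · exact fun h => absurd h (not_mem_edge ht hC)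
  · exact fun _ => Finset.Subset.refl _
  · exact Finset.subset_union_left

lemma gEdge_ins_g3 (hm : 1 ≤ m) (hk : 1 ≤ k) (hkm : k ≤ m)
    (ht : IsLTree (lbl m) t) (hS₀ : S₀ ∈ t) {C : Finset ℕ} (hC : C ∈ t) (hSC : S₀ ⊆ C) :
    gEdge k (insertLeaf t S₀ (m + 1)) (C ∪ {m + 1}) = gEdge k t C := by
  refine gEdge_core hm hk hkm ht hS₀ hC ?_ ?_ ?_ ?_
  · exact fun D _ hCD => Finset.union_subset_union_left hCD
  · exact fun _ => hSC
  · exact fun h => absurd (Finset.mem_union_right _ (Finset.mem_singleton_self _)) h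
  · exact Finset.subset_union_left.trans Finset.subset_union_left

lemma gEdge_ins_new (hm : 1 ≤ m) (hk : 1 ≤ k) (hkm : k ≤ m)
    (ht : IsLTree (lbl m) t) (hS₀ : S₀ ∈ t) :
    gEdge k (insertLeaf t S₀ (m + 1)) {m + 1} = gEdge k t S₀ := by
  refine gEdge_core hm hk hkm ht hS₀ hS₀ ?_ ?_ ?_ ?_
  · exact fun D _ _ => Finset.singleton_subset_iff.mpr
      (Finset.mem_union_right _ (Finset.mem_singleton_self _))
  · exact fun _ => Finset.Subset.refl _
  · exact fun h => absurd (Finset.mem_singleton_self _) h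
  · exact Finset.subset_union_right

lemma piProj_ins_old (hm : 1 ≤ m) (hk : 1 ≤ k) (hkm : k ≤ m)
    (ht : IsLTree (lbl m) t) (hS₀ : S₀ ∈ t) {i : ℕ} (hi : i ∈ lbl m) :
    piProjA (insertLeaf t S₀ (m + 1)) (lbl k) i = piProjA t (lbl k) i := by
  rw [piProjA_eq_gEdge, piProjA_eq_gEdge]
  exact gEdge_ins_tpart hm hk hkm ht hS₀ (ht.2.1 i hi)

lemma piProj_ins_new (hm : 1 ≤ m) (hk : 1 ≤ k) (hkm : k ≤ m)
    (ht : IsLTree (lbl m) t) (hS₀ : S₀ ∈ t) :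
    piProjA (insertLeaf t S₀ (m + 1)) (lbl k) (m + 1) = gEdge k t S₀ := by
  rw [piProjA_eq_gEdge]
  exact gEdge_ins_new hm hk hkm ht hS₀

lemma piProj_small (hk : 1 ≤ k) (hkm : k ≤ m) (ht : IsLTree (lbl m) t)
    {i : ℕ} (hi : i ∈ lbl k) : piProjA t (lbl k) i = {i} := by
  have him : i ∈ lbl m := mem_lbl.mpr ⟨(mem_lbl.mp hi).1, (mem_lbl.mp hi).2.trans hkm⟩
  have hit : ({i} : Finset ℕ) ∈ t := ht.2.1 i him
  have hfam : (t.filter fun C => ({i} : Finset ℕ) ⊆ C ∧ (C ∩ lbl k).Nonempty).Nonempty :=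
    ⟨{i}, Finset.mem_filter.mpr ⟨hit, Finset.Subset.refl _,
      ⟨i, Finset.mem_inter.mpr ⟨Finset.mem_singleton_self i, hi⟩⟩⟩⟩
  rw [piProjA_eq_gEdge]
  ext x
  rw [mem_gEdge hfam]
  constructor
  · rintro ⟨h1, h2⟩
    exact h2 {i} hit (Finset.Subset.refl _)
      ⟨i, Finset.mem_inter.mpr ⟨Finset.mem_singleton_self i, hi⟩⟩
  · intro hx
    have : x = i := Finset.mem_singleton.mp hx
    subst this
    exact ⟨hi, fun C _ hC _ => hC (Finset.mem_singleton_self x)⟩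

lemma massOf_def {n : ℕ} {B : Finset ℕ} :
    massOf n k t B = ((lbl n).filter fun j => piProjA t (lbl k) j = B).card := rfl

lemma urnOf_def {n : ℕ} {B : Finset ℕ} :
    urnOf n k t B = if B.card ≤ 1 then massOf n k t B - 1 else massOf n k t B := rfl

lemma massOf_ext_pos (hk : 1 ≤ k) (hkm : k ≤ m) (ht : IsLTree (lbl m) t)
    {i : ℕ} (hi : i ∈ lbl k) : 1 ≤ massOf m k t {i} := by
  rw [massOf_def]
  refine Finset.card_pos.mpr ⟨i, Finset.mem_filter.mpr ⟨?_, piProj_small hk hkm ht hi⟩⟩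
  exact mem_lbl.mpr ⟨(mem_lbl.mp hi).1, (mem_lbl.mp hi).2.trans hkm⟩

lemma urnOf_base (hk : 1 ≤ k) (ht : IsLTree (lbl k) t) :
    urnOf k k t = fun _ => 0 := by
  funext B
  rw [urnOf_def]
  have hπ : ∀ j ∈ lbl k, piProjA t (lbl k) j = {j} :=
    fun j hj => piProj_small hk (le_refl k) ht hj
  have hmass : massOf k k t B ≤ 1 := by
    rw [massOf_def]
    refine Finset.card_le_one.mpr fun a ha b hb => ?_
    rcases Finset.mem_filter.mp ha with ⟨ha1, ha2⟩
    rcases Finset.mem_filter.mp hb with ⟨hb1, hb2⟩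
    rw [hπ a ha1] at ha2; rw [hπ b hb1] at hb2
    have := ha2.trans hb2.symm
    exact Finset.singleton_injective this
  by_cases hcard : B.card ≤ 1
  · rw [if_pos hcard]; omega
  · rw [if_neg hcard]
    rw [massOf_def]
    refine Finset.card_eq_zero.mpr (Finset.filter_eq_empty_iff.mpr fun {j} hj => ?_)
    rw [hπ j hj]
    intro h
    rw [← h] at hcard
    exact hcard (by simp)

lemma massOf_ins (hm : 1 ≤ m) (hk : 1 ≤ k) (hkm : k ≤ m)
    (ht : IsLTree (lbl m) t) (hS₀ : S₀ ∈ t) {B : Finset ℕ} :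
    massOf (m + 1) k (insertLeaf t S₀ (m + 1)) B =
      massOf m k t B + (if gEdge k t S₀ = B then 1 else 0) := by
  rw [massOf_def, massOf_def, lbl_succ]
  have hnotin : (m + 1) ∉ lbl m := by intro h; have := (mem_lbl.mp h).2; omega
  rw [Finset.filter_insert]
  have hfc : (lbl m).filter (fun j => piProjA (insertLeaf t S₀ (m + 1)) (lbl k) j = B) =
      (lbl m).filter (fun j => piProjA t (lbl k) j = B) := by
    refine Finset.filter_congr fun j hj => ?_
    rw [piProj_ins_old hm hk hkm ht hS₀ hj]
  rw [piProj_ins_new hm hk hkm ht hS₀]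
  by_cases hg : gEdge k t S₀ = B
  · rw [if_pos hg, if_pos hg, Finset.card_insert_of_notMem
      (fun h => hnotin (Finset.mem_of_mem_filter _ h)), hfc]
  · rw [if_neg hg, if_neg hg, hfc, Nat.add_zero]

lemma card_le_one_mem_tree {u : Finset (Finset ℕ)} (hu : IsLTree (lbl k) u)
    {B : Finset ℕ} (hB : B ∈ u) (hc : B.card ≤ 1) : ∃ i ∈ lbl k, B = {i} := by
  have hne := edge_nonempty hu hB
  have : B.card = 1 := le_antisymm hc (Finset.card_pos.mpr hne)
  obtain ⟨i, hi⟩ := Finset.card_eq_one.mp this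
  exact ⟨i, edge_subset hu hB (hi ▸ Finset.mem_singleton_self i), hi⟩

lemma urnOf_ins {s : Finset (Finset ℕ)} (hs : IsLTree (lbl k) s)
    (hm : 1 ≤ m) (hk : 1 ≤ k) (hkm : k ≤ m)
    (ht : IsLTree (lbl m) t) (hS₀ : S₀ ∈ t) (hg : gEdge k t S₀ ∈ s) :
    urnOf (m + 1) k (insertLeaf t S₀ (m + 1)) = bumpF (urnOf m k t) (gEdge k t S₀) := by
  funext B
  rw [bumpF, urnOf_def, urnOf_def, massOf_ins hm hk hkm ht hS₀]
  by_cases hBg : B = gEdge k t S₀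
  · rw [if_pos hBg, if_pos hBg.symm]
    by_cases hcard : B.card ≤ 1
    · rw [if_pos hcard, if_pos hcard]
      obtain ⟨i, hik, hBi⟩ := card_le_one_mem_tree hs (hBg ▸ hg) hcard
      have := massOf_ext_pos hk hkm ht hik
      rw [hBi] at *
      omega
    · rw [if_neg hcard, if_neg hcard]
  · have hgB : ¬ gEdge k t S₀ = B := fun h => hBg h.symm
    rw [if_neg hgB, if_neg hBg, Nat.add_zero]

end Aux4
section Aux5

variable {α : ℝ} {m k : ℕ} {s t : Finset (Finset ℕ)} {S₀ : Finset ℕ}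

/-- Invariant carried along the growth chain. -/
def InvT (α : ℝ) (k m : ℕ) (s t : Finset (Finset ℕ)) : Prop :=
  IsLTree (lbl m) t ∧ k ≤ m ∧
  (∀ S ∈ t, gEdge k t S ∈ s) ∧
  (∀ B ∈ s, (∑ S ∈ t, if gEdge k t S = B then fordWeight α S else 0)
     = fordWeight α B + (urnOf m k t B : ℝ))

lemma invT_base (hk : 2 ≤ k) (hs : IsLTree (lbl k) s) : InvT α k k s s := by
  refine ⟨hs, le_refl k, fun S hS => by rw [gEdge_self hs hS]; exact hS, fun B hB => ?_⟩
  have h1 : (∑ S ∈ s, if gEdge k s S = B then fordWeight α S else 0)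
      = ∑ S ∈ s, if S = B then fordWeight α S else 0 := by
    refine Finset.sum_congr rfl fun S hS => ?_
    rw [gEdge_self hs hS]
  rw [h1, Finset.sum_ite_eq' s B (fun S => fordWeight α S), if_pos hB,
    congrFun (urnOf_base (by omega) hs) B]
  norm_num

lemma invT_step (hk : 2 ≤ k) (hs : IsLTree (lbl k) s) (hI : InvT α k m s t)
    (hS₀ : S₀ ∈ t) : InvT α k (m + 1) s (insertLeaf t S₀ (m + 1)) := by
  obtain ⟨ht, hkm, hI2, hI3⟩ := hI
  have hm : 1 ≤ m := le_trans (by omega) hkm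
  have hk1 : 1 ≤ k := by omega
  have hS₀ne : S₀.Nonempty := edge_nonempty ht hS₀
  have hjnot : ∀ {C : Finset ℕ}, C ∈ t → (m + 1) ∉ C := fun hC => not_mem_edge ht hC
  refine ⟨isLTree_insertLeaf hm ht hS₀, by omega, ?_, ?_⟩
  · intro S' hS'
    rcases mem_insertLeaf'.mp hS' with ⟨hCt, hCP⟩ | ⟨C, hC, hSC, rfl⟩ | rfl
    · rw [gEdge_ins_tpart hm hk1 hkm ht hS₀ hCt]; exact hI2 _ hCt
    · rw [gEdge_ins_g3 hm hk1 hkm ht hS₀ hC hSC]; exact hI2 _ hC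
    · rw [gEdge_ins_new hm hk1 hkm ht hS₀]; exact hI2 _ hS₀
  · intro B hB
    set g₀ := gEdge k t S₀ with hg₀
    -- decompose the new tree into three disjoint pieces
    have htdecomp : insertLeaf t S₀ (m + 1) =
        ((t.filter fun C => C ∩ S₀ = ∅ ∨ C ⊆ S₀) ∪
          (t.filter fun C => S₀ ⊆ C).image (fun C => C ∪ {m + 1})) ∪ {({m + 1} : Finset ℕ)} := by
      rw [insertLeaf, ← Finset.filter_or]
    have hd1 : Disjoint (t.filter fun C => C ∩ S₀ = ∅ ∨ C ⊆ S₀)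
        ((t.filter fun C => S₀ ⊆ C).image (fun C => C ∪ {m + 1})) := by
      rw [Finset.disjoint_left]
      rintro a ha hb
      obtain ⟨C, hC, rfl⟩ := Finset.mem_image.mp hb
      exact hjnot (Finset.mem_of_mem_filter _ ha)
        (Finset.mem_union_right _ (Finset.mem_singleton_self _))
    have hd2 : Disjoint ((t.filter fun C => C ∩ S₀ = ∅ ∨ C ⊆ S₀) ∪
        (t.filter fun C => S₀ ⊆ C).image (fun C => C ∪ {m + 1}))
        ({({m + 1} : Finset ℕ)} : Finset (Finset ℕ)) := by
      rw [Finset.disjoint_right]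
      rintro a ha hb
      rw [Finset.mem_singleton] at ha
      subst ha
      rcases Finset.mem_union.mp hb with h | h
      · exact hjnot (Finset.mem_of_mem_filter _ h) (Finset.mem_singleton_self _)
      · obtain ⟨C, hC, he⟩ := Finset.mem_image.mp h
        obtain ⟨x, hx⟩ := edge_nonempty ht (Finset.mem_of_mem_filter _ hC)
        have : x ∈ ({m + 1} : Finset ℕ) := he ▸ Finset.mem_union_left _ hx
        exact hjnot (Finset.mem_of_mem_filter _ hC) ((Finset.mem_singleton.mp this) ▸ hx)
    set F : Finset ℕ → ℝ :=
      fun S' => if gEdge k (insertLeaf t S₀ (m + 1)) S' = B then fordWeight α S' else 0 with hF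
    have hsum : (∑ S' ∈ insertLeaf t S₀ (m + 1), F S') =
        (∑ C ∈ t.filter (fun C => C ∩ S₀ = ∅ ∨ C ⊆ S₀), F C)
        + (∑ C ∈ t.filter (fun C => S₀ ⊆ C), F (C ∪ {m + 1}))
        + F {m + 1} := by
      rw [htdecomp, Finset.sum_union hd2, Finset.sum_union hd1, Finset.sum_singleton]
      congr 1
      refine congrArg (_ + ·) ?_
      refine Finset.sum_image fun C hC D hD he => ?_
      exact union_singleton_inj (hjnot (Finset.mem_of_mem_filter _ hC))
        (hjnot (Finset.mem_of_mem_filter _ hD)) he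
    -- evaluate the three pieces
    have hP1 : (∑ C ∈ t.filter (fun C => C ∩ S₀ = ∅ ∨ C ⊆ S₀), F C) =
        ∑ C ∈ t.filter (fun C => C ∩ S₀ = ∅ ∨ C ⊆ S₀),
          (if gEdge k t C = B then fordWeight α C else 0) := by
      refine Finset.sum_congr rfl fun C hC => ?_
      simp only [hF]
      rw [gEdge_ins_tpart hm hk1 hkm ht hS₀ (Finset.mem_of_mem_filter _ hC)]
    have hP2 : (∑ C ∈ t.filter (fun C => S₀ ⊆ C), F (C ∪ {m + 1})) =
        ∑ C ∈ t.filter (fun C => S₀ ⊆ C), (if gEdge k t C = B then α else 0) := by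
      refine Finset.sum_congr rfl fun C hC => ?_
      rcases Finset.mem_filter.mp hC with ⟨hCt, hSC⟩
      simp only [hF]
      rw [gEdge_ins_g3 hm hk1 hkm ht hS₀ hCt hSC]
      have hcard : 2 ≤ (C ∪ {m + 1}).card := by
        rw [Finset.card_union_of_disjoint (Finset.disjoint_singleton_right.mpr (hjnot hCt)),
          Finset.card_singleton]
        have : 0 < C.card := Finset.card_pos.mpr (edge_nonempty ht hCt)
        omega
      rw [fordWeight, if_pos hcard]
    have hP3 : F {m + 1} = if g₀ = B then 1 - α else 0 := by
      simp only [hF]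
      rw [gEdge_ins_new hm hk1 hkm ht hS₀, fordWeight, Finset.card_singleton]
      norm_num
      rfl
    -- relate the S₀-superset filter to the ¬P filter
    have hfilt : t.filter (fun C => S₀ ⊆ C) =
        insert S₀ (t.filter fun C => ¬(C ∩ S₀ = ∅ ∨ C ⊆ S₀)) := by
      ext C
      simp only [Finset.mem_filter, Finset.mem_insert]
      constructor
      · rintro ⟨hCt, hSC⟩
        by_cases hC : C = S₀
        · exact Or.inl hC
        · refine Or.inr ⟨hCt, ?_⟩
          intro hP
          exact hC (eq_of_P_of_subset hS₀ne hP hSC)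
      · rintro (rfl | ⟨hCt, hP⟩)
        · exact ⟨hS₀, Finset.Subset.refl _⟩
        · refine ⟨hCt, ?_⟩
          rcases ht.2.2.1 _ hCt _ hS₀ with h | h | h
          · exact absurd (Or.inl h) hP
          · exact absurd (Or.inr h) hP
          · exact h
    have hS₀notin : S₀ ∉ t.filter fun C => ¬(C ∩ S₀ = ∅ ∨ C ⊆ S₀) := by
      rw [Finset.mem_filter]
      rintro ⟨-, h⟩
      exact h (Or.inr (Finset.Subset.refl _))
    have hP2' : (∑ C ∈ t.filter (fun C => S₀ ⊆ C), (if gEdge k t C = B then α else 0)) =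
        (∑ C ∈ t.filter (fun C => ¬(C ∩ S₀ = ∅ ∨ C ⊆ S₀)), (if gEdge k t C = B then α else 0))
          + (if g₀ = B then α else 0) := by
      rw [hfilt, Finset.sum_insert hS₀notin, hg₀, add_comm]
    -- weights on strict supersets of S₀ are α
    have hwα : (∑ C ∈ t.filter (fun C => ¬(C ∩ S₀ = ∅ ∨ C ⊆ S₀)),
        (if gEdge k t C = B then fordWeight α C else 0)) =
        ∑ C ∈ t.filter (fun C => ¬(C ∩ S₀ = ∅ ∨ C ⊆ S₀)), (if gEdge k t C = B then α else 0) := by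
      refine Finset.sum_congr rfl fun C hC => ?_
      rcases Finset.mem_filter.mp hC with ⟨hCt, hP⟩
      have hSC : S₀ ⊆ C := by
        rcases ht.2.2.1 _ hCt _ hS₀ with h | h | h
        · exact absurd (Or.inl h) hP
        · exact absurd (Or.inr h) hP
        · exact h
      have hCne : C ≠ S₀ := fun h => hP (Or.inr (h ▸ Finset.Subset.refl _))
      have hcard : 2 ≤ C.card := by
        have h1 : S₀ ⊂ C := Finset.ssubset_iff_subset_ne.mpr ⟨hSC, fun h => hCne h.symm⟩
        have h2 : S₀.card < C.card := Finset.card_lt_card h1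
        have h3 : 0 < S₀.card := Finset.card_pos.mpr hS₀ne
        omega
      rw [fordWeight, if_pos hcard]
    -- the old-tree sum
    have hold : (∑ S ∈ t, if gEdge k t S = B then fordWeight α S else 0) =
        (∑ C ∈ t.filter (fun C => C ∩ S₀ = ∅ ∨ C ⊆ S₀),
          (if gEdge k t C = B then fordWeight α C else 0))
        + ∑ C ∈ t.filter (fun C => ¬(C ∩ S₀ = ∅ ∨ C ⊆ S₀)),
            (if gEdge k t C = B then fordWeight α C else 0) :=
      (Finset.sum_filter_add_sum_filter_not t _ _).symm
    -- urn bump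
    have hurn : (urnOf (m + 1) k (insertLeaf t S₀ (m + 1)) B : ℝ)
        = (urnOf m k t B : ℝ) + (if g₀ = B then 1 else 0) := by
      rw [urnOf_ins hs hm hk1 hkm ht hS₀ (hI2 _ hS₀), bumpF]
      by_cases hBg : B = g₀
      · rw [if_pos hBg, if_pos hBg.symm]; push_cast; ring
      · rw [if_neg hBg, if_neg fun h => hBg h.symm]; push_cast; ring
    have hI3' := hI3 B hB
    rw [hold, hwα] at hI3'
    rw [hsum, hP1, hP2, hP3, hP2', hurn]
    by_cases hgB : g₀ = B
    · rw [if_pos hgB, if_pos hgB, if_pos hgB]; linarith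
    · rw [if_neg hgB, if_neg hgB, if_neg hgB]; linarith

end Aux5
section Aux6

variable {α : ℝ} {m k : ℕ} {s t : Finset (Finset ℕ)}

lemma one_step (hk : 2 ≤ k) (hs : IsLTree (lbl k) s) (hI : InvT α k m s t)
    (c' : Finset ℕ → ℕ) :
    (∑ z : LTree (lbl (m + 1)), growStepF α m t z.1 *
      (if urnOf (m + 1) k z.1 = c' then 1 else 0)) = urnStep α s (urnOf m k t) c' := by
  obtain ⟨ht, hkm, hI2, hI3⟩ := hI
  have hm : 1 ≤ m := le_trans (by omega) hkm
  have hk1 : 1 ≤ k := by omega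
  set W : ℝ := ∑ S' ∈ t, fordWeight α S' with hW
  set c₀ : Finset ℕ → ℕ := urnOf m k t with hc₀
  -- Step 1: collapse the sum over trees to a sum over edges of t
  have h1 : ∀ S ∈ t, (∑ z : LTree (lbl (m + 1)),
      (if z.1 = insertLeaf t S (m + 1) then fordWeight α S / W else 0) *
        (if urnOf (m + 1) k z.1 = c' then 1 else 0)) =
      (fordWeight α S / W) * (if bumpF c₀ (gEdge k t S) = c' then 1 else 0) := by
    intro S hS
    set z₀ : LTree (lbl (m + 1)) := ⟨insertLeaf t S (m + 1), isLTree_insertLeaf hm ht hS⟩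
      with hz₀
    have hstep : (∑ z : LTree (lbl (m + 1)),
        (if z.1 = insertLeaf t S (m + 1) then fordWeight α S / W else 0) *
          (if urnOf (m + 1) k z.1 = c' then 1 else 0)) =
        ∑ z : LTree (lbl (m + 1)), (if z = z₀ then
          (fordWeight α S / W) * (if urnOf (m + 1) k z₀.1 = c' then 1 else 0) else 0) := by
      refine Finset.sum_congr rfl fun z _ => ?_
      by_cases hzz : z = z₀
      · subst hzz
        rw [if_pos rfl, if_pos rfl]
      · rw [if_neg hzz, if_neg (fun h => hzz (Subtype.ext h)), zero_mul]
    rw [hstep, Finset.sum_ite_eq' Finset.univ z₀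
      (fun _ => (fordWeight α S / W) * (if urnOf (m + 1) k z₀.1 = c' then 1 else 0)),
      if_pos (Finset.mem_univ z₀)]
    have : urnOf (m + 1) k z₀.1 = bumpF c₀ (gEdge k t S) :=
      urnOf_ins hs hm hk1 hkm ht hS (hI2 S hS)
    rw [this]
  have h2 : (∑ z : LTree (lbl (m + 1)), growStepF α m t z.1 *
      (if urnOf (m + 1) k z.1 = c' then 1 else 0)) =
      ∑ S ∈ t, (fordWeight α S / W) * (if bumpF c₀ (gEdge k t S) = c' then 1 else 0) := by
    have : ∀ z : LTree (lbl (m + 1)), growStepF α m t z.1 *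
        (if urnOf (m + 1) k z.1 = c' then 1 else 0) =
        ∑ S ∈ t, (if z.1 = insertLeaf t S (m + 1) then fordWeight α S / W else 0) *
          (if urnOf (m + 1) k z.1 = c' then 1 else 0) := by
      intro z
      rw [growStepF, Finset.sum_mul]
    rw [Finset.sum_congr rfl fun z _ => this z, Finset.sum_comm]
    exact Finset.sum_congr rfl h1
  -- Step 2: indicator expansion over the edges of s
  have key : ∀ (f : Finset ℕ → ℝ) (S : Finset ℕ), S ∈ t →
      f (gEdge k t S) = ∑ B ∈ s, if gEdge k t S = B then f B else 0 := by
    intro f S hS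
    rw [Finset.sum_ite_eq s (gEdge k t S) f, if_pos (hI2 S hS)]
  have h3 : (∑ S ∈ t, (fordWeight α S / W) *
      (if bumpF c₀ (gEdge k t S) = c' then 1 else 0)) =
      ∑ B ∈ s, (fordWeight α B + (c₀ B : ℝ)) *
        ((if bumpF c₀ B = c' then 1 else 0) / W) := by
    have hterm : ∀ S ∈ t, (fordWeight α S / W) *
        (if bumpF c₀ (gEdge k t S) = c' then 1 else 0) =
        ∑ B ∈ s, if gEdge k t S = B then
          (fordWeight α S) * ((if bumpF c₀ B = c' then 1 else 0) / W) else 0 := by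
      intro S hS
      rw [← key (fun B => (fordWeight α S) * ((if bumpF c₀ B = c' then 1 else 0) / W)) S hS]
      ring
    rw [Finset.sum_congr rfl hterm, Finset.sum_comm]
    refine Finset.sum_congr rfl fun B hB => ?_
    have : (∑ S ∈ t, if gEdge k t S = B then
        (fordWeight α S) * ((if bumpF c₀ B = c' then 1 else 0) / W) else 0) =
        (∑ S ∈ t, if gEdge k t S = B then fordWeight α S else 0) *
          ((if bumpF c₀ B = c' then 1 else 0) / W) := by
      rw [Finset.sum_mul]
      refine Finset.sum_congr rfl fun S _ => ?_
      by_cases hgS : gEdge k t S = B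
      · rw [if_pos hgS, if_pos hgS]
      · rw [if_neg hgS, if_neg hgS, zero_mul]
    rw [this, hI3 B hB]
  -- Step 3: the normalizers agree
  have hWD : W = ∑ B ∈ s, (fordWeight α B + ((c₀ B : ℕ) : ℝ)) := by
    have hterm : ∀ S ∈ t, fordWeight α S =
        ∑ B ∈ s, if gEdge k t S = B then fordWeight α S else 0 := by
      intro S hS
      exact key (fun _ => fordWeight α S) S hS
    rw [hW, Finset.sum_congr rfl hterm, Finset.sum_comm]
    exact Finset.sum_congr rfl fun B hB => hI3 B hB
  rw [h2, h3, urnStep, ← hWD]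
  refine Finset.sum_congr rfl fun B hB => ?_
  by_cases hb : bumpF c₀ B = c'
  · rw [if_pos hb, if_pos hb.symm]; ring
  · rw [if_neg hb, if_neg (fun h => hb h.symm)]; ring

end Aux6
section Aux7

variable {α : ℝ} {k : ℕ}

lemma grow_nonzero {m : ℕ} {u v : Finset (Finset ℕ)} (h : growStepF α m u v ≠ 0) :
    ∃ S ∈ u, v = insertLeaf u S (m + 1) := by
  rw [growStepF] at h
  obtain ⟨S, hS, hne⟩ := Finset.exists_ne_zero_of_sum_ne_zero h
  refine ⟨S, hS, ?_⟩
  by_contra hv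
  rw [if_neg hv] at hne
  exact hne rfl

lemma chain_inv (hk : 2 ≤ k) (s : LTree (lbl k)) :
    ∀ (r : ℕ) (y : (l : Fin (r + 1)) → LTree (lbl (k + l.1))),
      y ⟨0, Nat.succ_pos r⟩ = s →
      (∀ l : Fin r, growStepF α (k + l.1) (y l.castSucc).1 (y l.succ).1 ≠ 0) →
      InvT α k (k + r) s.1 (y (Fin.last r)).1 := by
  intro r
  induction r with
  | zero =>
    intro y h0 _
    rw [show (Fin.last 0) = (⟨0, Nat.succ_pos 0⟩ : Fin 1) from rfl, h0]
    exact invT_base hk s.2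
  | succ r ih =>
    intro y h0 hstep
    have hInv : InvT α k (k + r) s.1 ((fun l : Fin (r + 1) => y l.castSucc) (Fin.last r)).1 := by
      refine ih (fun l => y l.castSucc) h0 fun l => ?_
      have := hstep l.castSucc
      rwa [Fin.succ_castSucc] at this
    have hlast := hstep (Fin.last r)
    rw [Fin.succ_last] at hlast
    obtain ⟨S, hS, he⟩ := grow_nonzero hlast
    rw [← Fin.succ_last, Fin.succ_last, he]
    exact invT_step hk s.2 hInv hS

lemma ite_and_mul {A B : Prop} [Decidable A] [Decidable B] :
    (if A ∧ B then (1 : ℝ) else 0) = (if A then 1 else 0) * (if B then 1 else 0) := by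
  by_cases hA : A <;> by_cases hB : B <;> simp [hA, hB]

lemma forall_split {r : ℕ} {P : Fin (r + 2) → Prop} :
    (∀ l, P l) ↔ (∀ l : Fin (r + 1), P l.castSucc) ∧ P (Fin.last (r + 1)) := by
  constructor
  · exact fun h => ⟨fun l => h _, h _⟩
  · rintro ⟨h1, h2⟩ l
    exact Fin.lastCases h2 h1 l

end Aux7

/-- **Lemma 4.9 (Pólya urn).** Conditionally on `T_k = 𝐬`, the edge-weight process
`(x_1(r)-1, …, x_k(r)-1, (y_B(r)))_{r ≥ 0}` of the projected decorated `k`-trees of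
Ford's alpha growth process is distributed as the generalized Pólya urn on the edges
of `𝐬` with weights `1-α+H_B` (external) and `α+H_B` (internal), started from zero. -/
theorem lemma_lempolya (α : ℝ) (hα0 : 0 ≤ α) (hα1 : α ≤ 1) (k : ℕ) (hk : 2 ≤ k)
    (s : LTree (lbl k)) (hs : 0 < qF α k s) :
    ∀ (r : ℕ) (h : ℕ → (Finset ℕ → ℕ)),
      (∑ y : (l : Fin (r + 1)) → LTree (lbl (k + l.1)),
          (qF α k (y ⟨0, Nat.succ_pos r⟩) *
              ∏ l : Fin r, growStepF α (k + l.1) (y l.castSucc).1 (y l.succ).1) *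
            (if y ⟨0, Nat.succ_pos r⟩ = s ∧
                (∀ l : Fin (r + 1), urnOf (k + l.1) k (y l).1 = h l.1) then 1 else 0)) /
        qF α k s
      = (if h 0 = fun _ => 0 then 1 else 0) *
          ∏ l : Fin r, urnStep α s.1 (h l.1) (h (l.1 + 1)) := by
  intro r
  induction r with
  | zero =>
    intro h
    have hred : ∀ y : (l : Fin 1) → LTree (lbl (k + l.1)),
        (qF α k (y ⟨0, Nat.succ_pos 0⟩) *
            ∏ l : Fin 0, growStepF α (k + l.1) (y l.castSucc).1 (y l.succ).1) *
          (if y ⟨0, Nat.succ_pos 0⟩ = s ∧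
              (∀ l : Fin 1, urnOf (k + l.1) k (y l).1 = h l.1) then 1 else 0) =
        (if y ⟨0, Nat.succ_pos 0⟩ = s then
          qF α k s * (if urnOf k k s.1 = h 0 then 1 else 0) else 0) := by
      intro y
      rw [Fin.prod_univ_zero, mul_one]
      have hfa : (y ⟨0, Nat.succ_pos 0⟩ = s ∧
          (∀ l : Fin 1, urnOf (k + l.1) k (y l).1 = h l.1)) ↔
          (y ⟨0, Nat.succ_pos 0⟩ = s ∧ urnOf k k (y ⟨0, Nat.succ_pos 0⟩).1 = h 0) := by
        constructor
        · rintro ⟨h1, h2⟩; exact ⟨h1, h2 ⟨0, Nat.succ_pos 0⟩⟩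
        · rintro ⟨h1, h2⟩
          refine ⟨h1, fun l => ?_⟩
          have hl : l = ⟨0, Nat.succ_pos 0⟩ := Subsingleton.elim _ _
          rw [hl]; exact h2
      rw [if_congr hfa rfl rfl]
      by_cases hy : y ⟨0, Nat.succ_pos 0⟩ = s
      · have hiff : (y ⟨0, Nat.succ_pos 0⟩ = s ∧
            urnOf k k (y ⟨0, Nat.succ_pos 0⟩).1 = h 0) ↔ (urnOf k k s.1 = h 0) := by
          rw [hy]; exact and_iff_right rfl
        rw [if_congr hiff rfl rfl, if_pos hy, hy]
      · rw [if_neg hy, if_neg (fun hc => hy hc.1), mul_zero]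
    rw [Finset.sum_congr rfl fun y _ => hred y]
    rw [Fintype.sum_equiv (Equiv.piUnique fun l : Fin 1 => LTree (lbl (k + l.1)))
      (fun y : (l : Fin 1) → LTree (lbl (k + l.1)) => if y ⟨0, Nat.succ_pos 0⟩ = s then
        qF α k s * (if urnOf k k s.1 = h 0 then 1 else 0) else 0)
      (fun a => if a = s then qF α k s * (if urnOf k k s.1 = h 0 then 1 else 0) else 0)
      (fun y => rfl)]
    show (∑ x : LTree (lbl k), if x = s then
        qF α k s * (if urnOf k k s.1 = h 0 then 1 else 0) else 0) / qF α k s = _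
    rw [Finset.sum_ite_eq' Finset.univ s
      (fun _ => qF α k s * (if urnOf k k s.1 = h 0 then 1 else 0)),
      if_pos (Finset.mem_univ s)]
    rw [mul_comm, mul_div_assoc, div_self hs.ne', mul_one]
    rw [urnOf_base (by omega) s.2, Fin.prod_univ_zero, mul_one]
    by_cases hu : h 0 = fun _ => 0
    · rw [if_pos hu, if_pos hu.symm]
    · rw [if_neg hu, if_neg fun hc => hu hc.symm]
  | succ r ih =>
    intro h
    have h1 : (∑ y : (l : Fin (r + 1 + 1)) → LTree (lbl (k + l.1)),
        (qF α k (y ⟨0, Nat.succ_pos (r + 1)⟩) *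
            ∏ l : Fin (r + 1), growStepF α (k + l.1) (y l.castSucc).1 (y l.succ).1) *
          (if y ⟨0, Nat.succ_pos (r + 1)⟩ = s ∧
              (∀ l : Fin (r + 1 + 1), urnOf (k + l.1) k (y l).1 = h l.1) then 1 else 0)) =
        ∑ p : LTree (lbl (k + r + 1)) × ((l : Fin (r + 1)) → LTree (lbl (k + l.1))),
          ((qF α k (p.2 ⟨0, Nat.succ_pos r⟩) *
              ∏ l : Fin r, growStepF α (k + l.1) (p.2 l.castSucc).1 (p.2 l.succ).1) *
            (if p.2 ⟨0, Nat.succ_pos r⟩ = s ∧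
                (∀ l : Fin (r + 1), urnOf (k + l.1) k (p.2 l).1 = h l.1) then 1 else 0)) *
          (growStepF α (k + r) (p.2 (Fin.last r)).1 p.1.1 *
            (if urnOf (k + r + 1) k p.1.1 = h (r + 1) then 1 else 0)) := by
      refine Fintype.sum_equiv
        ⟨fun y => (y (Fin.last (r + 1)), fun l => y l.castSucc),
         fun p => Fin.snoc p.2 p.1, ?_, ?_⟩ _ _ fun y => ?_
      · intro y
        funext l
        refine Fin.lastCases ?_ (fun i => ?_) l
        · exact Fin.snoc_last _ _
        · exact Fin.snoc_castSucc _ _ i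
      · intro p
        refine Prod.ext ?_ ?_
        · exact @Fin.snoc_last (r + 1) (fun l => LTree (lbl (k + l.1))) p.1 p.2
        · funext l
          exact @Fin.snoc_castSucc (r + 1) (fun l => LTree (lbl (k + l.1))) p.1 p.2 l
      · show (qF α k (y ⟨0, Nat.succ_pos (r + 1)⟩) *
            ∏ l : Fin (r + 1), growStepF α (k + l.1) (y l.castSucc).1 (y l.succ).1) *
          (if y ⟨0, Nat.succ_pos (r + 1)⟩ = s ∧
              (∀ l : Fin (r + 1 + 1), urnOf (k + l.1) k (y l).1 = h l.1) then 1 else 0) =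
          ((qF α k (y ⟨0, Nat.succ_pos (r + 1)⟩) *
              ∏ l : Fin r, growStepF α (k + l.1) (y l.castSucc.castSucc).1
                (y l.succ.castSucc).1) *
            (if y ⟨0, Nat.succ_pos (r + 1)⟩ = s ∧
                (∀ l : Fin (r + 1), urnOf (k + l.1) k (y l.castSucc).1 = h l.1)
              then 1 else 0)) *
          (growStepF α (k + r) (y (Fin.last r).castSucc).1 (y (Fin.last (r + 1))).1 *
            (if urnOf (k + r + 1) k (y (Fin.last (r + 1))).1 = h (r + 1) then 1 else 0))
        have hiff : (y ⟨0, Nat.succ_pos (r + 1)⟩ = s ∧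
            (∀ l : Fin (r + 1 + 1), urnOf (k + l.1) k (y l).1 = h l.1)) ↔
            ((y ⟨0, Nat.succ_pos (r + 1)⟩ = s ∧
              (∀ l : Fin (r + 1), urnOf (k + l.1) k (y l.castSucc).1 = h l.1)) ∧
              urnOf (k + r + 1) k (y (Fin.last (r + 1))).1 = h (r + 1)) := by
          constructor
          · rintro ⟨h1', h2'⟩
            exact ⟨⟨h1', fun l => h2' l.castSucc⟩, h2' (Fin.last (r + 1))⟩
          · rintro ⟨⟨h1', h2'⟩, h3'⟩
            refine ⟨h1', fun l => ?_⟩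
            refine Fin.lastCases ?_ (fun i => ?_) l
            · exact h3'
            · exact h2' i
        rw [if_congr hiff rfl rfl, ite_and_mul]
        simp only [Fin.prod_univ_castSucc, Fin.succ_castSucc, Fin.coe_castSucc, Fin.succ_last,
          Fin.val_last]
        ring
    have h2 : ∀ q : (l : Fin (r + 1)) → LTree (lbl (k + l.1)),
        (∑ z : LTree (lbl (k + r + 1)),
          ((qF α k (q ⟨0, Nat.succ_pos r⟩) *
              ∏ l : Fin r, growStepF α (k + l.1) (q l.castSucc).1 (q l.succ).1) *
            (if q ⟨0, Nat.succ_pos r⟩ = s ∧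
                (∀ l : Fin (r + 1), urnOf (k + l.1) k (q l).1 = h l.1) then 1 else 0)) *
          (growStepF α (k + r) (q (Fin.last r)).1 z.1 *
            (if urnOf (k + r + 1) k z.1 = h (r + 1) then 1 else 0))) =
        ((qF α k (q ⟨0, Nat.succ_pos r⟩) *
            ∏ l : Fin r, growStepF α (k + l.1) (q l.castSucc).1 (q l.succ).1) *
          (if q ⟨0, Nat.succ_pos r⟩ = s ∧
              (∀ l : Fin (r + 1), urnOf (k + l.1) k (q l).1 = h l.1) then 1 else 0)) *
        urnStep α s.1 (h r) (h (r + 1)) := by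
      intro q
      rw [← Finset.mul_sum]
      by_cases hcond : q ⟨0, Nat.succ_pos r⟩ = s ∧
          (∀ l : Fin (r + 1), urnOf (k + l.1) k (q l).1 = h l.1)
      · by_cases hzero : (qF α k (q ⟨0, Nat.succ_pos r⟩) *
            ∏ l : Fin r, growStepF α (k + l.1) (q l.castSucc).1 (q l.succ).1) = 0
        · rw [hzero, zero_mul, zero_mul, zero_mul]
        · congr 1
          rcases mul_ne_zero_iff.mp hzero with ⟨-, hprodne⟩
          have hfac : ∀ l : Fin r,
              growStepF α (k + l.1) (q l.castSucc).1 (q l.succ).1 ≠ 0 := by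
            intro l hf
            exact hprodne (Finset.prod_eq_zero (Finset.mem_univ l) hf)
          have hInv := chain_inv hk s r q hcond.1 hfac
          have hone := one_step hk s.2 hInv (h (r + 1))
          have hqr : urnOf (k + r) k (q (Fin.last r)).1 = h r := hcond.2 (Fin.last r)
          rw [hqr] at hone
          exact hone
      · rw [if_neg hcond, mul_zero, zero_mul, zero_mul]
    have h3 : (∑ p : LTree (lbl (k + r + 1)) × ((l : Fin (r + 1)) → LTree (lbl (k + l.1))),
        ((qF α k (p.2 ⟨0, Nat.succ_pos r⟩) *
            ∏ l : Fin r, growStepF α (k + l.1) (p.2 l.castSucc).1 (p.2 l.succ).1) *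
          (if p.2 ⟨0, Nat.succ_pos r⟩ = s ∧
              (∀ l : Fin (r + 1), urnOf (k + l.1) k (p.2 l).1 = h l.1) then 1 else 0)) *
        (growStepF α (k + r) (p.2 (Fin.last r)).1 p.1.1 *
          (if urnOf (k + r + 1) k p.1.1 = h (r + 1) then 1 else 0))) =
        (∑ y : (l : Fin (r + 1)) → LTree (lbl (k + l.1)),
          (qF α k (y ⟨0, Nat.succ_pos r⟩) *
              ∏ l : Fin r, growStepF α (k + l.1) (y l.castSucc).1 (y l.succ).1) *
            (if y ⟨0, Nat.succ_pos r⟩ = s ∧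
                (∀ l : Fin (r + 1), urnOf (k + l.1) k (y l).1 = h l.1) then 1 else 0)) *
        urnStep α s.1 (h r) (h (r + 1)) := by
      rw [Fintype.sum_prod_type, Finset.sum_comm, Finset.sum_mul]
      exact Finset.sum_congr rfl fun q _ => h2 q
    rw [h1, h3, mul_comm, mul_div_assoc, ih h]
    simp only [Fin.prod_univ_castSucc, Fin.coe_castSucc, Fin.val_last]
    ring
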